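/- arXiv:1704.08796 — 4 statements merged into one kernel-verified Lean document; each statement's English description precedes it below -/
import Mathlib

section
/- Let H be a simple bipartite matching covered graph on at least four vertices with color classes A and B. An edge e of H is non-removable if and only if there exist a partition (A_0, A_1) of A and a partition (B_0, B_1) of B such that |A_0| = |B_0| and e is the only edge of H joining a vertex of B_0 to a vertex of A_1. -/
/-! Preamble: definitions for matching covered graphs, bricks, removable
doubletons, R-compatible/R-thin edges, retracts, ladders, partial biwheels,
R-configurations, and the eleven infinite families. -/

/-- The graph has a perfect matching. -/
def HasPerfMatching {V : Type*} (G : SimpleGraph V) : Prop :=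
  ∃ M : G.Subgraph, M.IsPerfectMatching

/-- A graph (with at least two vertices) is matching covered if it is connected
and each of its edges lies in some perfect matching. -/
def MatchingCovered {V : Type*} (G : SimpleGraph V) : Prop :=
  2 ≤ Nat.card V ∧ G.Connected ∧
    ∀ e ∈ G.edgeSet, ∃ M : G.Subgraph, M.IsPerfectMatching ∧ e ∈ M.edgeSet

/-- An edge of a matching covered graph is removable if deleting it leaves a
matching covered graph. -/
def RemovableEdge {V : Type*} (G : SimpleGraph V) (e : Sym2 V) : Prop :=
  e ∈ G.edgeSet ∧ MatchingCovered (G.deleteEdges {e})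

/-- The number of odd connected components. -/
noncomputable def oddCompCount {V : Type*} (G : SimpleGraph V) : ℕ :=
  Nat.card {c : G.ConnectedComponent // Odd (Nat.card c.supp)}

/-- `S` is a barrier of `G`: `S` is nonempty and the number of odd components
of `G − S` equals `|S|`. -/
def IsBarrierOf {V : Type*} (G : SimpleGraph V) (S : Set V) : Prop :=
  S.Nonempty ∧ oddCompCount (G.induce (Sᶜ : Set V)) = S.ncard

/-- Bicritical: at least four vertices, and deleting any two distinct vertices
leaves a graph with a perfect matching. -/
def BicriticalGraph {V : Type*} (G : SimpleGraph V) : Prop :=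
  4 ≤ Nat.card V ∧ ∀ u v : V, u ≠ v →
    HasPerfMatching (G.induce (({u, v} : Set V)ᶜ))

/-- 3-connected: at least four vertices, and deleting any set of at most two
vertices leaves a connected graph. -/
def ThreeConnectedGraph {V : Type*} (G : SimpleGraph V) : Prop :=
  4 ≤ Nat.card V ∧ ∀ S : Set V, S.ncard ≤ 2 → (G.induce (Sᶜ : Set V)).Connected

/-- A brick is a 3-connected bicritical graph. -/
def BrickGraph {V : Type*} (G : SimpleGraph V) : Prop :=
  ThreeConnectedGraph G ∧ BicriticalGraph G

/-- `A`, `B` form a bipartition of `G`. -/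
def BipartitionOf {V : Type*} (G : SimpleGraph V) (A B : Set V) : Prop :=
  A ∪ B = Set.univ ∧ Disjoint A B ∧ ∀ ⦃u v : V⦄, G.Adj u v → (u ∈ A ↔ v ∈ B)

/-- `G` is bipartite. -/
def BipartiteGraph {V : Type*} (G : SimpleGraph V) : Prop :=
  ∃ A B : Set V, BipartitionOf G A B

/-- `{α, β}` is a removable doubleton of `G`: a pair of distinct edges whose
deletion leaves a bipartite matching covered graph. -/
def RemovableDoubleton {V : Type*} (G : SimpleGraph V) (α β : Sym2 V) : Prop :=
  α ≠ β ∧ α ∈ G.edgeSet ∧ β ∈ G.edgeSet ∧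
    BipartiteGraph (G.deleteEdges {α, β}) ∧ MatchingCovered (G.deleteEdges {α, β})

/-- An `R`-brick: a brick with a fixed removable doubleton `R = {α, β}`. -/
def RBrick {V : Type*} (G : SimpleGraph V) (α β : Sym2 V) : Prop :=
  BrickGraph G ∧ RemovableDoubleton G α β

/-- `V(R)`: the set of the four ends of the doubleton edges. -/
def VR {V : Type*} (α β : Sym2 V) : Set V := {v | v ∈ α ∨ v ∈ β}

/-- `e` is `R`-compatible: it is an edge of `H := G − R` and is removable in
both `G` and `H`. -/
def RCompatible {V : Type*} (G : SimpleGraph V) (α β e : Sym2 V) : Prop :=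
  e ∈ (G.deleteEdges {α, β}).edgeSet ∧
    MatchingCovered (G.deleteEdges {e}) ∧
    MatchingCovered ((G.deleteEdges {α, β}).deleteEdges {e})

/-- `e` is `R`-thin: `R`-compatible, and every barrier of `G − e` has at most
two vertices. -/
def RThin {V : Type*} (G : SimpleGraph V) (α β e : Sym2 V) : Prop :=
  RCompatible G α β e ∧
    ∀ S : Set V, IsBarrierOf (G.deleteEdges {e}) S → S.ncard ≤ 2

/-- The number of maximal nontrivial barriers of a graph. -/
noncomputable def barrierIndex {V : Type*} (G : SimpleGraph V) : ℕ :=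
  Set.ncard {S : Set V | IsBarrierOf G S ∧ 2 ≤ S.ncard ∧
    ∀ T : Set V, IsBarrierOf G T → S ⊆ T → T = S}

/-- Degree of a vertex (as the cardinality of its neighbourhood). -/
noncomputable def degOf {V : Type*} (G : SimpleGraph V) (v : V) : ℕ :=
  (G.neighborSet v).ncard

/-- The relation identifying each degree-two vertex with its neighbours
(bicontraction of all degree-two vertices at once). -/
def bicontractPairRel {V : Type*} (G : SimpleGraph V) (u v : V) : Prop :=
  G.Adj u v ∧ (degOf G u = 2 ∨ degOf G v = 2)

/-- The vertex identifications performed when taking the retract. -/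
def retractSetoid {V : Type*} (G : SimpleGraph V) : Setoid V :=
  Relation.EqvGen.setoid (bicontractPairRel G)

/-- The retract of `G` (as a simple graph on the quotient). -/
def retractGraph {V : Type*} (G : SimpleGraph V) :
    SimpleGraph (Quotient (retractSetoid G)) where
  Adj X Y := X ≠ Y ∧ ∃ u v : V,
    Quotient.mk (retractSetoid G) u = X ∧ Quotient.mk (retractSetoid G) v = Y ∧ G.Adj u v
  symm := by
    constructor
    rintro X Y ⟨hne, u, v, hu, hv, huv⟩
    exact ⟨hne.symm, v, u, hv, hu, huv.symm⟩
  loopless := by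
    constructor
    rintro X ⟨hne, -⟩
    exact hne rfl

/-- The retract of `G` has a pair of parallel edges. -/
def retractHasParallel {V : Type*} (G : SimpleGraph V) : Prop :=
  ∃ p q p' q' : V, G.Adj p q ∧ G.Adj p' q' ∧ s(p, q) ≠ s(p', q') ∧
    ¬ Relation.EqvGen (bicontractPairRel G) p q ∧
    ((Relation.EqvGen (bicontractPairRel G) p p' ∧
        Relation.EqvGen (bicontractPairRel G) q q') ∨
     (Relation.EqvGen (bicontractPairRel G) p q' ∧
        Relation.EqvGen (bicontractPairRel G) q p'))

/-- `e` is strictly `R`-thin: `R`-thin and the retract of `G − e` has no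
parallel edges. -/
def StrictlyRThin {V : Type*} (G : SimpleGraph V) (α β e : Sym2 V) : Prop :=
  RThin G α β e ∧ ¬ retractHasParallel (G.deleteEdges {e})

/-- The ladder with `m` rungs: two paths `x₀…x_{m-1}` (first coordinate `0`)
and `y₀…y_{m-1}` (first coordinate `1`) together with the rungs `xᵢyᵢ`. -/
def ladderGraph (m : ℕ) : SimpleGraph (Fin 2 × Fin m) :=
  SimpleGraph.fromRel (fun p q =>
    (p.1 = q.1 ∧ p.2.val + 1 = q.2.val) ∨ (p.1 ≠ q.1 ∧ p.2 = q.2))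

/-- The partial biwheel on the odd path `x₀…x_{2k-1}` (the `inl` vertices)
with hubs `u = inr 0` (joined to the even-indexed path vertices) and
`w = inr 1` (joined to the odd-indexed path vertices). -/
def biwheelGraph (k : ℕ) : SimpleGraph (Fin (2 * k) ⊕ Fin 2) :=
  SimpleGraph.fromRel (fun p q =>
    match p, q with
    | Sum.inl i, Sum.inl j => i.val + 1 = j.val
    | Sum.inr h, Sum.inl i => (h = 0 ∧ i.val % 2 = 0) ∨ (h = 1 ∧ i.val % 2 = 1)
    | _, _ => False)

/-- The subgraph `K` of `Γ` is a ladder with `m` rungs and corners `a u b w`: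
`au` and `bw` are its external rungs, labelled according to the convention
that `a` and `w` lie in one colour class and `b` and `u` in the other. -/
def LadderOn {W : Type*} (Γ : SimpleGraph W) (K : Γ.Subgraph) (m : ℕ)
    (a u b w : W) : Prop :=
  ∃ (hm : 3 ≤ m) (φ : ladderGraph m ≃g K.coe),
    (φ ((0 : Fin 2), (⟨0, by omega⟩ : Fin m))).val = a ∧
    (φ ((1 : Fin 2), (⟨0, by omega⟩ : Fin m))).val = u ∧
    (if m % 2 = 1 then
        (φ ((0 : Fin 2), (⟨m - 1, by omega⟩ : Fin m))).val = w ∧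
        (φ ((1 : Fin 2), (⟨m - 1, by omega⟩ : Fin m))).val = b
      else
        (φ ((1 : Fin 2), (⟨m - 1, by omega⟩ : Fin m))).val = w ∧
        (φ ((0 : Fin 2), (⟨m - 1, by omega⟩ : Fin m))).val = b)

/-- The subgraph `K` of `Γ` is a partial biwheel (parameter `k`, order `2k+2`)
with ends `a`, `b` and hubs `u`, `w`; its external spokes are `au` and `bw`. -/
def BiwheelOn {W : Type*} (Γ : SimpleGraph W) (K : Γ.Subgraph) (k : ℕ)
    (a u b w : W) : Prop :=
  ∃ (hk : 2 ≤ k) (φ : biwheelGraph k ≃g K.coe),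
    (φ (Sum.inl (⟨0, by omega⟩ : Fin (2 * k)))).val = a ∧
    (φ (Sum.inl (⟨2 * k - 1, by omega⟩ : Fin (2 * k)))).val = b ∧
    (φ (Sum.inr 0)).val = u ∧
    (φ (Sum.inr 1)).val = w

/-- Truncated biwheel: a spanning partial biwheel plus the edges `aw`, `bu`. -/
def IsTruncatedBiwheel {V : Type*} (G : SimpleGraph V) : Prop :=
  ∃ (K : G.Subgraph) (k : ℕ) (a u b w : V),
    BiwheelOn G K k a u b w ∧ K.verts = Set.univ ∧
    G.edgeSet = K.edgeSet ∪ {s(a, w), s(b, u)}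

/-- Prism: a spanning odd ladder plus the edges `aw`, `bu`. -/
def IsPrism {V : Type*} (G : SimpleGraph V) : Prop :=
  ∃ (K : G.Subgraph) (m : ℕ) (a u b w : V),
    Odd m ∧ LadderOn G K m a u b w ∧ K.verts = Set.univ ∧
    G.edgeSet = K.edgeSet ∪ {s(a, w), s(b, u)}

/-- Möbius ladder: a spanning even ladder plus the edges `aw`, `bu`;
by convention `K₄` is also a Möbius ladder. -/
def IsMobiusLadder {V : Type*} (G : SimpleGraph V) : Prop :=
  (∃ (K : G.Subgraph) (m : ℕ) (a u b w : V),
    Even m ∧ LadderOn G K m a u b w ∧ K.verts = Set.univ ∧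
    G.edgeSet = K.edgeSet ∪ {s(a, w), s(b, u)}) ∨
  Nonempty (G ≃g (⊤ : SimpleGraph (Fin 4)))

/-- Staircase: a ladder plus two new vertices `a₂`, `b₂` and the five edges
`a a₂`, `u a₂`, `b b₂`, `w b₂`, `a₂ b₂`. -/
def IsStaircase {V : Type*} (G : SimpleGraph V) : Prop :=
  ∃ (K : G.Subgraph) (m : ℕ) (a u b w a2 b2 : V),
    LadderOn G K m a u b w ∧
    a2 ∉ K.verts ∧ b2 ∉ K.verts ∧ a2 ≠ b2 ∧
    K.verts ∪ {a2, b2} = Set.univ ∧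
    G.edgeSet = K.edgeSet ∪ {s(a, a2), s(u, a2), s(b, b2), s(w, b2), s(a2, b2)}

/-- Pseudo-biwheel: a partial biwheel of order at least eight plus two new
vertices `a₂`, `b₂` and the five edges `a a₂`, `u a₂`, `b b₂`, `w b₂`,
`a₂ b₂`. -/
def IsPseudoBiwheel {V : Type*} (G : SimpleGraph V) : Prop :=
  ∃ (K : G.Subgraph) (k : ℕ) (a u b w a2 b2 : V),
    3 ≤ k ∧ BiwheelOn G K k a u b w ∧
    a2 ∉ K.verts ∧ b2 ∉ K.verts ∧ a2 ≠ b2 ∧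
    K.verts ∪ {a2, b2} = Set.univ ∧
    G.edgeSet = K.edgeSet ∪ {s(a, a2), s(u, a2), s(b, b2), s(w, b2), s(a2, b2)}

/-- Double biwheel of type I: two partial biwheels sharing precisely their
hubs `u`, `w`, plus the edges `a₁a₂` and `b₁b₂`. -/
def IsDoubleBiwheelI {V : Type*} (G : SimpleGraph V) : Prop :=
  ∃ (K1 K2 : G.Subgraph) (k1 k2 : ℕ) (a1 b1 a2 b2 u w : V),
    BiwheelOn G K1 k1 a1 u b1 w ∧ BiwheelOn G K2 k2 a2 u b2 w ∧
    K1.verts ∩ K2.verts = {u, w} ∧ K1.verts ∪ K2.verts = Set.univ ∧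
    G.edgeSet = K1.edgeSet ∪ K2.edgeSet ∪ {s(a1, a2), s(b1, b2)}

/-- Double ladder of type I. -/
def IsDoubleLadderI {V : Type*} (G : SimpleGraph V) : Prop :=
  ∃ (K1 K2 : G.Subgraph) (m1 m2 : ℕ) (a1 b1 a2 b2 u w : V),
    LadderOn G K1 m1 a1 u b1 w ∧ LadderOn G K2 m2 a2 u b2 w ∧
    K1.verts ∩ K2.verts = {u, w} ∧ K1.verts ∪ K2.verts = Set.univ ∧
    G.edgeSet = K1.edgeSet ∪ K2.edgeSet ∪ {s(a1, a2), s(b1, b2)}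

/-- Laddered biwheel of type I. -/
def IsLadderedBiwheelI {V : Type*} (G : SimpleGraph V) : Prop :=
  ∃ (K1 K2 : G.Subgraph) (k1 m2 : ℕ) (a1 b1 a2 b2 u w : V),
    BiwheelOn G K1 k1 a1 u b1 w ∧ LadderOn G K2 m2 a2 u b2 w ∧
    K1.verts ∩ K2.verts = {u, w} ∧ K1.verts ∪ K2.verts = Set.univ ∧
    G.edgeSet = K1.edgeSet ∪ K2.edgeSet ∪ {s(a1, a2), s(b1, b2)}

/-- Double biwheel of type II: two vertex-disjoint partial biwheels of order
at least eight plus the four edges `a₁a₂`, `b₁b₂`, `u₁w₂`, `w₁u₂`. -/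
def IsDoubleBiwheelII {V : Type*} (G : SimpleGraph V) : Prop :=
  ∃ (K1 K2 : G.Subgraph) (k1 k2 : ℕ) (a1 u1 b1 w1 a2 u2 b2 w2 : V),
    3 ≤ k1 ∧ 3 ≤ k2 ∧
    BiwheelOn G K1 k1 a1 u1 b1 w1 ∧ BiwheelOn G K2 k2 a2 u2 b2 w2 ∧
    K1.verts ∩ K2.verts = ∅ ∧ K1.verts ∪ K2.verts = Set.univ ∧
    G.edgeSet = K1.edgeSet ∪ K2.edgeSet ∪
      {s(a1, a2), s(b1, b2), s(u1, w2), s(w1, u2)}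

/-- Double ladder of type II. -/
def IsDoubleLadderII {V : Type*} (G : SimpleGraph V) : Prop :=
  ∃ (K1 K2 : G.Subgraph) (m1 m2 : ℕ) (a1 u1 b1 w1 a2 u2 b2 w2 : V),
    LadderOn G K1 m1 a1 u1 b1 w1 ∧ LadderOn G K2 m2 a2 u2 b2 w2 ∧
    K1.verts ∩ K2.verts = ∅ ∧ K1.verts ∪ K2.verts = Set.univ ∧
    G.edgeSet = K1.edgeSet ∪ K2.edgeSet ∪
      {s(a1, a2), s(b1, b2), s(u1, w2), s(w1, u2)}

/-- Laddered biwheel of type II. -/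
def IsLadderedBiwheelII {V : Type*} (G : SimpleGraph V) : Prop :=
  ∃ (K1 K2 : G.Subgraph) (k1 m2 : ℕ) (a1 u1 b1 w1 a2 u2 b2 w2 : V),
    3 ≤ k1 ∧
    BiwheelOn G K1 k1 a1 u1 b1 w1 ∧ LadderOn G K2 m2 a2 u2 b2 w2 ∧
    K1.verts ∩ K2.verts = ∅ ∧ K1.verts ∪ K2.verts = Set.univ ∧
    G.edgeSet = K1.edgeSet ∪ K2.edgeSet ∪
      {s(a1, a2), s(b1, b2), s(u1, w2), s(w1, u2)}

/-- Membership in one of the eleven infinite families. -/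
def InEleven {V : Type*} (G : SimpleGraph V) : Prop :=
  IsTruncatedBiwheel G ∨ IsPrism G ∨ IsMobiusLadder G ∨ IsStaircase G ∨
  IsPseudoBiwheel G ∨ IsDoubleBiwheelI G ∨ IsDoubleLadderI G ∨
  IsLadderedBiwheelI G ∨ IsDoubleBiwheelII G ∨ IsDoubleLadderII G ∨
  IsLadderedBiwheelII G

/-- An `R`-ladder configuration: a subgraph `K` of `H := G − R` which is a
ladder with external rungs `au` and `bw` (free corners `u`, `w`) such that
every vertex of `K` except possibly `u` and `w` is cubic in `G`, the corners
`a` and `b` lie in `V(R)`, and every internal rung is an `R`-thin edge of `G`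
whose index is two. -/
def RLadderConfig {V : Type*} (G : SimpleGraph V) (α β : Sym2 V)
    (K : (G.deleteEdges {α, β}).Subgraph) (a u b w : V) : Prop :=
  ∃ (m : ℕ) (hm : 3 ≤ m) (φ : ladderGraph m ≃g K.coe),
    (φ ((0 : Fin 2), (⟨0, by omega⟩ : Fin m))).val = a ∧
    (φ ((1 : Fin 2), (⟨0, by omega⟩ : Fin m))).val = u ∧
    (if m % 2 = 1 then
        (φ ((0 : Fin 2), (⟨m - 1, by omega⟩ : Fin m))).val = w ∧
        (φ ((1 : Fin 2), (⟨m - 1, by omega⟩ : Fin m))).val = b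
      else
        (φ ((1 : Fin 2), (⟨m - 1, by omega⟩ : Fin m))).val = w ∧
        (φ ((0 : Fin 2), (⟨m - 1, by omega⟩ : Fin m))).val = b) ∧
    (∀ v ∈ K.verts, v ≠ u → v ≠ w → degOf G v = 3) ∧
    a ∈ VR α β ∧ b ∈ VR α β ∧
    (∀ i : Fin m, 0 < i.val → i.val < m - 1 →
      RThin G α β s((φ ((0 : Fin 2), i)).val, (φ ((1 : Fin 2), i)).val) ∧
      barrierIndex
        (G.deleteEdges {s((φ ((0 : Fin 2), i)).val, (φ ((1 : Fin 2), i)).val)}) = 2)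

/-- An `R`-biwheel configuration: a subgraph `K` of `H := G − R` which is a
partial biwheel with external spokes `au` and `bw` (hubs `u`, `w`) such that
the hubs are not cubic in `G`, every other vertex of `K` is cubic in `G`, the
ends `a` and `b` lie in `V(R)`, and every internal spoke is an `R`-thin edge
of `G` whose index is one. -/
def RBiwheelConfig {V : Type*} (G : SimpleGraph V) (α β : Sym2 V)
    (K : (G.deleteEdges {α, β}).Subgraph) (a u b w : V) : Prop :=
  ∃ (k : ℕ) (hk : 2 ≤ k) (φ : biwheelGraph k ≃g K.coe),
    (φ (Sum.inl (⟨0, by omega⟩ : Fin (2 * k)))).val = a ∧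
    (φ (Sum.inl (⟨2 * k - 1, by omega⟩ : Fin (2 * k)))).val = b ∧
    (φ (Sum.inr 0)).val = u ∧
    (φ (Sum.inr 1)).val = w ∧
    degOf G u ≠ 3 ∧ degOf G w ≠ 3 ∧
    (∀ v ∈ K.verts, v ≠ u → v ≠ w → degOf G v = 3) ∧
    a ∈ VR α β ∧ b ∈ VR α β ∧
    (∀ e ∈ K.edgeSet, (u ∈ e ∨ w ∈ e) → e ≠ s(a, u) → e ≠ s(b, w) →
      RThin G α β e ∧ barrierIndex (G.deleteEdges {e}) = 1)

/-- An `R`-configuration: an `R`-ladder or an `R`-biwheel, with free corners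
`u` and `w`. -/
def RConfig {V : Type*} (G : SimpleGraph V) (α β : Sym2 V)
    (K : (G.deleteEdges {α, β}).Subgraph) (a u b w : V) : Prop :=
  RLadderConfig G α β K a u b w ∨ RBiwheelConfig G α β K a u b w

/-- A 4-cycle on the four (distinct) vertices `v0 v1 v2 v3`. -/
def Is4Cycle {V : Type*} (H : SimpleGraph V) (v0 v1 v2 v3 : V) : Prop :=
  v0 ≠ v1 ∧ v0 ≠ v2 ∧ v0 ≠ v3 ∧ v1 ≠ v2 ∧ v1 ≠ v3 ∧ v2 ≠ v3 ∧
  H.Adj v0 v1 ∧ H.Adj v1 v2 ∧ H.Adj v2 v3 ∧ H.Adj v3 v0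

/-- The cut `∂(X)`. -/
def edgeCutOf {V : Type*} (G : SimpleGraph V) (X : Set V) : Set (Sym2 V) :=
  {e | e ∈ G.edgeSet ∧ ∃ p q : V, e = s(p, q) ∧ p ∈ X ∧ q ∉ X}

/-- The cut `∂(X)` is tight: every perfect matching contains exactly one of
its edges. -/
def TightCut {V : Type*} (G : SimpleGraph V) (X : Set V) : Prop :=
  ∀ M : G.Subgraph, M.IsPerfectMatching → (M.edgeSet ∩ edgeCutOf G X).ncard = 1

/-- A brace: a bipartite matching covered graph with no nontrivial tight cut. -/
def IsBrace {V : Type*} (G : SimpleGraph V) : Prop :=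
  BipartiteGraph G ∧ MatchingCovered G ∧
    ¬ ∃ X : Set V, 2 ≤ X.ncard ∧ 2 ≤ Xᶜ.ncard ∧ TightCut G X

set_option linter.unusedSectionVars false

section Stmt10Aux

open SimpleGraph

variable {V : Type*} [Fintype V]

private lemma pm_partner {H : SimpleGraph V} {M : H.Subgraph} (hM : M.IsPerfectMatching) :
    ∃ μ : V → V, (∀ v, M.Adj v (μ v)) ∧ (∀ v w, M.Adj v w → w = μ v) ∧
      (∀ v, μ (μ v) = v) ∧ Function.Injective μ := by
  have h := SimpleGraph.Subgraph.isPerfectMatching_iff.mp hM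
  choose μ h1 h2 using h
  have hinv : ∀ v, μ (μ v) = v := fun v => (h2 (μ v) v (h1 v).symm).symm
  exact ⟨μ, h1, h2, hinv, fun x y hxy => by rw [← hinv x, hxy, hinv y]⟩

private lemma edge_orient {H : SimpleGraph V} {A B : Set V} (hbip : BipartitionOf H A B)
    {e : Sym2 V} (he : e ∈ H.edgeSet) :
    ∃ q p : V, e = s(q, p) ∧ H.Adj q p ∧ q ∈ A ∧ p ∈ B := by
  induction e using Sym2.ind with
  | _ x y =>
    rw [SimpleGraph.mem_edgeSet] at he
    by_cases hx : x ∈ A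
    · exact ⟨x, y, rfl, he, hx, (hbip.2.2 he).mp hx⟩
    · have hxB : x ∈ B := by
        have : x ∈ A ∪ B := hbip.1 ▸ Set.mem_univ x
        exact this.resolve_left hx
      have hyA : y ∈ A := (hbip.2.2 he.symm).mpr hxB
      exact ⟨y, x, Sym2.eq_swap, he.symm, hyA, hxB⟩

private lemma bip_ncard_eq {H : SimpleGraph V} {A B : Set V} (hbip : BipartitionOf H A B)
    {M : H.Subgraph} (hM : M.IsPerfectMatching) : A.ncard = B.ncard := by
  obtain ⟨μ, h1, h2, hinv, hinj⟩ := pm_partner hM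
  have himg : μ '' A = B := by
    apply Set.Subset.antisymm
    · rintro y ⟨x, hx, rfl⟩; exact (hbip.2.2 (h1 x).adj_sub).mp hx
    · intro y hy
      have hyadj : H.Adj y (μ y) := (h1 y).adj_sub
      exact ⟨μ y, (hbip.2.2 hyadj.symm).mpr hy, hinv y⟩
  rw [← himg, Set.ncard_image_of_injOn hinj.injOn]

private lemma exists_other_edge {H : SimpleGraph V} (hconn : H.Connected)
    (hcard : 3 ≤ Nat.card V) {p q : V} (hpq : H.Adj p q) :
    ∃ x y : V, H.Adj x y ∧ s(x, y) ≠ s(p, q) ∧ (x = p ∨ x = q) := by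
  classical
  obtain ⟨r, hrp, hrq⟩ : ∃ r : V, r ≠ p ∧ r ≠ q := by
    by_contra hcon
    push_neg at hcon
    have hsub : (Finset.univ : Finset V) ⊆ {p, q} := by
      intro r _
      by_cases h : r = p
      · simp [h]
      · simp [hcon r h]
    have h2 : Fintype.card V ≤ 2 := by
      calc Fintype.card V = (Finset.univ : Finset V).card := rfl
        _ ≤ ({p, q} : Finset V).card := Finset.card_le_card hsub
        _ ≤ 2 := by
            apply le_trans (Finset.card_insert_le p {q})
            simp
    rw [Nat.card_eq_fintype_card] at hcard; omega
  obtain ⟨w0⟩ := hconn.preconnected p r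
  have hP := w0.toPath.2
  set w := w0.toPath.1 with hwdef
  clear_value w
  cases w with
  | nil => exact absurd rfl hrp.symm
  | @cons _ c _ h1 w1 =>
    by_cases hc : c = q
    · cases w1 with
      | nil => exact absurd hc hrq
      | @cons _ d _ h2 w2 =>
        refine ⟨c, d, h2, ?_, Or.inr hc⟩
        have hdp : d ≠ p := by
          intro hdp
          subst hdp
          have hnd := hP.support_nodup
          rw [SimpleGraph.Walk.support_cons, SimpleGraph.Walk.support_cons] at hnd
          exact (List.nodup_cons.mp hnd).1
            (List.mem_cons_of_mem _ w2.start_mem_support)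
        intro hcon
        rw [Sym2.eq_iff] at hcon
        rcases hcon with ⟨hcp, -⟩ | ⟨-, hdp'⟩
        · exact hpq.ne (hcp ▸ hc)
        · exact hdp hdp'
    · refine ⟨p, c, h1, ?_, Or.inl rfl⟩
      intro hcon
      rw [Sym2.eq_iff] at hcon
      rcases hcon with ⟨-, hcq⟩ | ⟨hpq', -⟩
      · exact hc hcq
      · exact hpq.ne hpq'

private lemma exists_pm_avoiding {H : SimpleGraph V} (hMC : MatchingCovered H)
    (hcard : 3 ≤ Nat.card V) {p q : V} (hpq : H.Adj p q) :
    ∃ M : H.Subgraph, M.IsPerfectMatching ∧ s(p, q) ∉ M.edgeSet := by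
  obtain ⟨x, y, hxy, hne, hx⟩ := exists_other_edge hMC.2.1 hcard hpq
  obtain ⟨M, hM, hmem⟩ := hMC.2.2 s(x, y) ((SimpleGraph.mem_edgeSet _).mpr hxy)
  refine ⟨M, hM, fun hcon => ?_⟩
  have hMxy : M.Adj x y := Subgraph.mem_edgeSet.mp hmem
  have hMpq : M.Adj p q := Subgraph.mem_edgeSet.mp hcon
  obtain ⟨μ, h1, h2, -, -⟩ := pm_partner hM
  rcases hx with rfl | rfl
  · exact hne (by rw [(h2 x y hMxy).trans (h2 x q hMpq).symm])
  · exact hne (by rw [(h2 x y hMxy).trans (h2 x p hMpq.symm).symm, Sym2.eq_swap])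

private lemma walk_stay {G : SimpleGraph V} {X : Set V}
    (hX : ∀ u v, G.Adj u v → u ∈ X → v ∈ X) {u v : V} (w : G.Walk u v) :
    u ∈ X → v ∈ X := by
  induction w with
  | nil => exact id
  | cons h w ih => exact fun hu => ih (hX _ _ h hu)

private lemma reachable_lift {G G' : SimpleGraph V}
    (h : ∀ u v, G.Adj u v → G'.Reachable u v) {u v : V} (w : G.Walk u v) :
    G'.Reachable u v := by
  induction w with
  | nil => exact Reachable.refl _
  | cons hadj w ih => exact (h _ _ hadj).trans ih

private lemma pm_transfer {G G' : SimpleGraph V} {M : G.Subgraph} (hM : M.IsPerfectMatching)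
    (hle : ∀ u v, M.Adj u v → G'.Adj u v) :
    ∃ M' : G'.Subgraph, M'.IsPerfectMatching ∧ ∀ u v, M'.Adj u v ↔ M.Adj u v := by
  refine ⟨⟨Set.univ, M.Adj, fun {u v} h => hle u v h, fun {u v} _ => Set.mem_univ u,
    ⟨fun u v h => h.symm⟩⟩, ⟨?_, fun v => Set.mem_univ v⟩, fun u v => Iff.rfl⟩
  intro v _
  exact (SimpleGraph.Subgraph.isPerfectMatching_iff.mp hM) v

private lemma deleteEdge_connected {H : SimpleGraph V} {A B : Set V}
    (hMC : MatchingCovered H) (hbip : BipartitionOf H A B) (hcard : 3 ≤ Nat.card V)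
    {q p : V} (hqp : H.Adj q p) (hqA : q ∈ A) (hpB : p ∈ B) :
    (H.deleteEdges {s(q, p)}).Connected := by
  classical
  obtain ⟨M, hM, heM⟩ := exists_pm_avoiding hMC hcard hqp
  obtain ⟨N, hN, heN⟩ := hMC.2.2 s(q, p) ((SimpleGraph.mem_edgeSet _).mpr hqp)
  obtain ⟨μ, hμ1, hμ2, hμinv, hμinj⟩ := pm_partner hM
  obtain ⟨ν, hν1, hν2, hνinv, hνinj⟩ := pm_partner hN
  have hMadj' : ∀ {x y}, M.Adj x y → (H.deleteEdges {s(q, p)}).Adj x y := by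
    intro x y h
    rw [SimpleGraph.deleteEdges_adj]
    refine ⟨h.adj_sub, fun hmem => heM ?_⟩
    rw [Set.mem_singleton_iff] at hmem
    exact hmem ▸ (Subgraph.mem_edgeSet.mpr h)
  have hνq : ν q = p := (hν2 q p (Subgraph.mem_edgeSet.mp heN)).symm
  set π : V → V := fun v => μ (ν v) with hπdef
  have hiterA : ∀ k : ℕ, π^[k] q ∈ A := by
    intro k
    induction k with
    | zero => exact hqA
    | succ k ih =>
      rw [Function.iterate_succ_apply']
      set x := π^[k] q
      have h1 : x ∈ B → False := fun hB => Set.disjoint_left.mp hbip.2.1 ih hB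
      have hνxB : ν x ∈ B := (hbip.2.2 (hν1 x).adj_sub).mp ih
      exact (hbip.2.2 ((hμ1 (ν x)).adj_sub).symm).mpr hνxB
  have hbase : (H.deleteEdges {s(q, p)}).Reachable p (π q) := by
    have : π q = μ p := by rw [hπdef]; simp [hνq]
    rw [this]
    exact (hMadj' (hμ1 p)).reachable
  have hreach : ∀ k : ℕ, 1 ≤ k → (H.deleteEdges {s(q, p)}).Reachable p (π^[k] q) := by
    intro k hk
    induction k, hk using Nat.le_induction with
    | base => rw [Function.iterate_one]; exact hbase
    | succ k hk ih =>
      rw [Function.iterate_succ_apply']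
      by_cases hxq : π^[k] q = q
      · rw [hxq]; exact hbase
      · set x := π^[k] q with hxdef
        have hxA : x ∈ A := hiterA k
        have hxp : x ≠ p := fun h => Set.disjoint_left.mp hbip.2.1 hxA (h ▸ hpB)
        have hadj1 : (H.deleteEdges {s(q, p)}).Adj x (ν x) := by
          rw [SimpleGraph.deleteEdges_adj]
          refine ⟨(hν1 x).adj_sub, fun hmem => ?_⟩
          rw [Set.mem_singleton_iff, Sym2.eq_iff] at hmem
          rcases hmem with ⟨h1, -⟩ | ⟨h1, -⟩
          · exact hxq h1
          · exact hxp h1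
        have hadj2 : (H.deleteEdges {s(q, p)}).Adj (ν x) (μ (ν x)) := hMadj' (hμ1 (ν x))
        exact ih.trans (hadj1.reachable.trans hadj2.reachable)
  have hπinj : Function.Injective π := fun x y hxy => hνinj (hμinj hxy)
  obtain ⟨i, j, hij, hiter⟩ := Finite.exists_ne_map_eq_of_infinite (fun k : ℕ => π^[k] q)
  have hkey : ∃ d : ℕ, 1 ≤ d ∧ π^[d] q = q := by
    rcases Ne.lt_or_gt hij with h | h
    · refine ⟨j - i, by omega, hπinj.iterate i ?_⟩
      rw [← Function.iterate_add_apply, show i + (j - i) = j by omega]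
      exact hiter.symm
    · refine ⟨i - j, by omega, hπinj.iterate j ?_⟩
      rw [← Function.iterate_add_apply, show j + (i - j) = i by omega]
      exact hiter
  obtain ⟨d, hd1, hdq⟩ := hkey
  have hpq_reach : (H.deleteEdges {s(q, p)}).Reachable p q := by
    have := hreach d hd1; rwa [hdq] at this
  have hlift : ∀ u v : V, H.Adj u v → (H.deleteEdges {s(q, p)}).Reachable u v := by
    intro u v huv
    by_cases h : s(u, v) = s(q, p)
    · rw [Sym2.eq_iff] at h
      rcases h with ⟨rfl, rfl⟩ | ⟨rfl, rfl⟩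
      · exact hpq_reach.symm
      · exact hpq_reach
    · refine SimpleGraph.Adj.reachable ?_
      rw [SimpleGraph.deleteEdges_adj]
      exact ⟨huv, by simpa using h⟩
  rw [SimpleGraph.connected_iff]
  refine ⟨fun u v => ?_, hMC.2.1.nonempty⟩
  obtain ⟨w⟩ := hMC.2.1.preconnected u v
  exact reachable_lift hlift w

end Stmt10Aux

/-- characterization of non-removable edges of bipartite
matching covered graphs. -/
theorem stmt10 {V : Type*} [Fintype V] (H : SimpleGraph V) (A B : Set V)
    (hMC : MatchingCovered H) (hbip : BipartitionOf H A B)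
    (hcard : 4 ≤ Nat.card V) (e : Sym2 V) (he : e ∈ H.edgeSet) :
    ¬ RemovableEdge H e ↔
      ∃ A0 A1 B0 B1 : Set V,
        A0 ∪ A1 = A ∧ Disjoint A0 A1 ∧ B0 ∪ B1 = B ∧ Disjoint B0 B1 ∧
        A0.ncard = B0.ncard ∧
        {f : Sym2 V | f ∈ H.edgeSet ∧ ∃ p ∈ B0, ∃ q ∈ A1, f = s(p, q)} = {e} := by
  classical
  constructor
  · -- forward direction
    intro hnot
    obtain ⟨q0, p0, he_eq, hqp, hq0A, hp0B⟩ := edge_orient hbip he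
    have hbip' : BipartitionOf (H.deleteEdges {e}) A B :=
      ⟨hbip.1, hbip.2.1, fun u v h => hbip.2.2 (SimpleGraph.deleteEdges_adj.mp h).1⟩
    have hnMC : ¬ MatchingCovered (H.deleteEdges {e}) := fun h => hnot ⟨he, h⟩
    have hconn' : (H.deleteEdges {e}).Connected := by
      rw [he_eq]
      exact deleteEdge_connected hMC hbip (by omega) hqp hq0A hp0B
    have hex : ∃ f ∈ (H.deleteEdges {e}).edgeSet,
        ∀ M : (H.deleteEdges {e}).Subgraph, M.IsPerfectMatching → f ∉ M.edgeSet := by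
      by_contra hcon
      push_neg at hcon
      refine hnMC ⟨by omega, hconn', fun f hf => ?_⟩
      obtain ⟨M, hM, h⟩ := hcon f hf
      exact ⟨M, hM, h⟩
    obtain ⟨f, hfE, hf_nopm⟩ := hex
    obtain ⟨a, b, hf_eq, hab', haA, hbB⟩ := edge_orient hbip' hfE
    subst hf_eq
    have hab : H.Adj a b := (SimpleGraph.deleteEdges_adj.mp hab').1
    obtain ⟨M, hM, heM⟩ : ∃ M : H.Subgraph, M.IsPerfectMatching ∧ e ∉ M.edgeSet := by
      obtain ⟨M, hM, hne⟩ := exists_pm_avoiding hMC (by omega) hqp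
      exact ⟨M, hM, by rwa [he_eq]⟩
    obtain ⟨N, hN, hfN⟩ := hMC.2.2 s(a, b) ((SimpleGraph.mem_edgeSet _).mpr hab)
    have heN : e ∈ N.edgeSet := by
      by_contra hc
      obtain ⟨N', hN', hiff⟩ := pm_transfer (G' := H.deleteEdges {e}) hN (fun u v h => by
        rw [SimpleGraph.deleteEdges_adj]
        refine ⟨h.adj_sub, fun hmem => hc ?_⟩
        rw [Set.mem_singleton_iff] at hmem
        rw [← hmem]
        exact SimpleGraph.Subgraph.mem_edgeSet.mpr h)
      exact hf_nopm N' hN'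
        (SimpleGraph.Subgraph.mem_edgeSet.mpr
          ((hiff a b).mpr (SimpleGraph.Subgraph.mem_edgeSet.mp hfN)))
    obtain ⟨μ, hμ1, hμ2, hμinv, hμinj⟩ := pm_partner hM
    obtain ⟨ν, hν1, hν2, hνinv, hνinj⟩ := pm_partner hN
    have hMadj' : ∀ {x y : V}, M.Adj x y → (H.deleteEdges {e}).Adj x y := by
      intro x y h
      rw [SimpleGraph.deleteEdges_adj]
      refine ⟨h.adj_sub, fun hmem => heM ?_⟩
      rw [Set.mem_singleton_iff] at hmem
      rw [← hmem]
      exact SimpleGraph.Subgraph.mem_edgeSet.mpr h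
    have hAB : A.ncard = B.ncard := bip_ncard_eq hbip hM
    let t : ↥(A \ {a}) → Finset V :=
      fun x => Set.Finite.toFinset (Set.toFinite {y | (H.deleteEdges {e}).Adj x.val y ∧ y ≠ b})
    have hmem_t : ∀ (x : ↥(A \ {a})) (y : V),
        y ∈ t x ↔ (H.deleteEdges {e}).Adj x.val y ∧ y ≠ b := by
      intro x y
      simp only [t, Set.Finite.mem_toFinset, Set.mem_setOf_eq]
    have hviol : ¬ ∀ s : Finset ↥(A \ {a}), s.card ≤ (s.biUnion t).card := by
      intro hall
      obtain ⟨g, hginj, hgt⟩ := (Finset.all_card_le_biUnion_card_iff_exists_injective t).mp hall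
      set m : V → V := fun v => if h : v ∈ A \ {a} then g ⟨v, h⟩ else b with hmdef
      have hm_diff : ∀ (v) (h : v ∈ A \ {a}), (H.deleteEdges {e}).Adj v (m v) ∧ m v ≠ b := by
        intro v h
        have hmv : m v = g ⟨v, h⟩ := by rw [hmdef]; simp [h]
        rw [hmv]
        exact (hmem_t _ _).mp (hgt ⟨v, h⟩)
      have hm_a : m a = b := by rw [hmdef]; simp
      have hm_adj : ∀ v ∈ A, (H.deleteEdges {e}).Adj v (m v) := by
        intro v hv
        by_cases h : v ∈ A \ {a}
        · exact (hm_diff v h).1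
        · have hva : v = a := by
            by_contra hva
            exact h ⟨hv, hva⟩
          rw [hva, hm_a]
          exact hab'
      have hmB : ∀ v ∈ A, m v ∈ B := fun v hv => (hbip'.2.2 (hm_adj v hv)).mp hv
      have hm_injOn : Set.InjOn m A := by
        intro x hx y hy hxy
        by_cases hxa : x ∈ A \ {a} <;> by_cases hya : y ∈ A \ {a}
        · have h1 : m x = g ⟨x, hxa⟩ := by rw [hmdef]; simp [hxa]
          have h2 : m y = g ⟨y, hya⟩ := by rw [hmdef]; simp [hya]
          rw [h1, h2] at hxy
          exact congrArg Subtype.val (hginj hxy)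
        · have hya' : y = a := by by_contra h; exact hya ⟨hy, h⟩
          rw [hya', hm_a] at hxy
          exact absurd hxy (hm_diff x hxa).2
        · have hxa' : x = a := by by_contra h; exact hxa ⟨hx, h⟩
          rw [hxa', hm_a] at hxy
          exact absurd hxy.symm (hm_diff y hya).2
        · have hxa' : x = a := by by_contra h; exact hxa ⟨hx, h⟩
          have hya' : y = a := by by_contra h; exact hya ⟨hy, h⟩
          rw [hxa', hya']
      have hm_img : m '' A = B := by
        apply Set.eq_of_subset_of_ncard_le
        · rintro y ⟨x, hx, rfl⟩; exact hmB x hx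
        · rw [Set.ncard_image_of_injOn hm_injOn, hAB]
        · exact Set.toFinite _
      set P : (H.deleteEdges {e}).Subgraph := {
        verts := Set.univ
        Adj := fun u v => (u ∈ A ∧ m u = v) ∨ (v ∈ A ∧ m v = u)
        adj_sub := by
          rintro u v (⟨hu, rfl⟩ | ⟨hv, rfl⟩)
          · exact hm_adj u hu
          · exact (hm_adj v hv).symm
        edge_vert := fun _ => Set.mem_univ _
        symm := ⟨fun u v h => h.symm⟩ } with hPdef
      have hPM : P.IsPerfectMatching := by
        refine ⟨fun v _ => ?_, fun v => Set.mem_univ v⟩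
        by_cases hv : v ∈ A
        · refine ⟨m v, Or.inl ⟨hv, rfl⟩, ?_⟩
          rintro y (⟨-, rfl⟩ | ⟨hy, hyv⟩)
          · rfl
          · exact absurd (hyv ▸ hmB y hy) (fun hB => Set.disjoint_left.mp hbip.2.1 hv hB)
        · have hvB : v ∈ B := (hbip.1 ▸ Set.mem_univ v : v ∈ A ∪ B).resolve_left hv
          obtain ⟨u, huA, hum⟩ : v ∈ m '' A := by rw [hm_img]; exact hvB
          refine ⟨u, Or.inr ⟨huA, hum⟩, ?_⟩
          rintro y (⟨hvA, -⟩ | ⟨hy, hyv⟩)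
          · exact absurd hvA hv
          · exact hm_injOn hy huA (hyv.trans hum.symm)
      exact hf_nopm P hPM (SimpleGraph.Subgraph.mem_edgeSet.mpr (Or.inl ⟨haA, hm_a⟩))
    push_neg at hviol
    obtain ⟨s, hs⟩ := hviol
    set S : Set V := Subtype.val '' (↑s : Set ↥(A \ {a})) with hSdef
    have hSsub : S ⊆ A \ {a} := by rintro _ ⟨x, -, rfl⟩; exact x.2
    have hSA : S ⊆ A := hSsub.trans Set.diff_subset
    have hScard : S.ncard = s.card := by
      rw [hSdef, Set.ncard_image_of_injOn Subtype.val_injective.injOn, Set.ncard_coe_finset]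
    set NS : Set V := {y | ∃ x ∈ S, (H.deleteEdges {e}).Adj x y} with hNSdef
    have hNSB : NS ⊆ B := by
      rintro y ⟨x, hx, hxy⟩
      exact (hbip'.2.2 hxy).mp (hSA hx)
    have hbiUnion : ((s.biUnion t : Finset V) : Set V) = NS \ {b} := by
      ext y
      constructor
      · intro hy
        rw [Finset.mem_coe, Finset.mem_biUnion] at hy
        obtain ⟨x, hxs, hyt⟩ := hy
        rw [hmem_t] at hyt
        exact ⟨⟨x.val, ⟨x, hxs, rfl⟩, hyt.1⟩, fun hc => hyt.2 (Set.mem_singleton_iff.mp hc)⟩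
      · rintro ⟨⟨x, hxS, hxy⟩, hyb⟩
        rw [Finset.mem_coe, Finset.mem_biUnion]
        obtain ⟨x', hx's, hx'val⟩ := hxS
        refine ⟨x', hx's, ?_⟩
        rw [hmem_t, hx'val]
        exact ⟨hxy, fun h => hyb (Set.mem_singleton_iff.mpr h)⟩
    have hkey : (NS \ {b}).ncard < S.ncard := by
      rw [hScard]
      calc (NS \ {b}).ncard = ((s.biUnion t : Finset V) : Set V).ncard := by rw [hbiUnion]
        _ = (s.biUnion t).card := Set.ncard_coe_finset _
        _ < s.card := hs
    have hf1 : S.ncard ≤ NS.ncard :=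
      Set.ncard_le_ncard_of_injOn μ (fun x hx => ⟨x, hx, hMadj' (hμ1 x)⟩)
        hμinj.injOn (Set.toFinite _)
    have hf2 : NS.ncard ≤ S.ncard := by
      have hsub : NS ⊆ (NS \ {b}) ∪ {b} := by
        intro y hy
        by_cases h : y = b
        · exact Or.inr (Set.mem_singleton_iff.mpr h)
        · exact Or.inl ⟨hy, fun hc => h (Set.mem_singleton_iff.mp hc)⟩
      calc NS.ncard ≤ ((NS \ {b}) ∪ {b}).ncard := Set.ncard_le_ncard hsub (Set.toFinite _)
        _ ≤ (NS \ {b}).ncard + ({b} : Set V).ncard := Set.ncard_union_le _ _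
        _ = (NS \ {b}).ncard + 1 := by rw [Set.ncard_singleton]
        _ ≤ S.ncard := by omega
    have hNab : N.Adj a b := SimpleGraph.Subgraph.mem_edgeSet.mp hfN
    have hbνS : ∀ x ∈ S, ν x ≠ b := by
      intro x hx h
      have hxa : x = a := by
        have h1 : x = ν b := by rw [← h, hνinv]
        have hνb : ν b = a := (hν2 b a hNab.symm).symm
        rw [hνb] at h1
        exact h1
      exact (hSsub hx).2 (Set.mem_singleton_iff.mpr hxa)
    have hmain : ¬ (ν '' S ⊆ NS \ {b}) := by
      intro hsub
      have h1 : (ν '' S).ncard = S.ncard := Set.ncard_image_of_injOn hνinj.injOn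
      have h2 : (ν '' S).ncard ≤ (NS \ {b}).ncard := Set.ncard_le_ncard hsub (Set.toFinite _)
      omega
    have hNmem : ∀ x : V, H.Adj x (ν x) := fun x => (hν1 x).adj_sub
    have hecase : ∀ x ∈ S, s(x, ν x) = e → x = q0 ∧ ν x = p0 := by
      intro x hx hxe
      rw [he_eq, Sym2.eq_iff] at hxe
      rcases hxe with h | ⟨h1, h2⟩
      · exact h
      · exact absurd hp0B (fun hB => Set.disjoint_left.mp hbip.2.1 (h1 ▸ hSA hx) hB)
    have hnS : ∀ x ∈ S, s(x, ν x) ≠ e → ν x ∈ NS := by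
      intro x hx hne
      refine ⟨x, hx, ?_⟩
      rw [SimpleGraph.deleteEdges_adj]
      exact ⟨hNmem x, by simpa using hne⟩
    have hp0b : p0 ≠ b := by
      intro hpb
      apply hmain
      rintro _ ⟨x, hx, rfl⟩
      refine ⟨?_, fun hc => hbνS x hx (Set.mem_singleton_iff.mp hc)⟩
      by_cases hxe : s(x, ν x) = e
      · exact absurd ((hecase x hx hxe).2.trans hpb) (hbνS x hx)
      · exact hnS x hx hxe
    have hp0NS : p0 ∉ NS := by
      intro hp0
      apply hmain
      rintro _ ⟨x, hx, rfl⟩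
      refine ⟨?_, fun hc => hbνS x hx (Set.mem_singleton_iff.mp hc)⟩
      by_cases hxe : s(x, ν x) = e
      · rw [(hecase x hx hxe).2]; exact hp0
      · exact hnS x hx hxe
    have hq0S : q0 ∈ S := by
      by_contra hq0
      apply hmain
      rintro _ ⟨x, hx, rfl⟩
      refine ⟨?_, fun hc => hbνS x hx (Set.mem_singleton_iff.mp hc)⟩
      by_cases hxe : s(x, ν x) = e
      · exact absurd ((hecase x hx hxe).1 ▸ hx) hq0
      · exact hnS x hx hxe
    refine ⟨A \ S, S, B \ NS, NS, Set.diff_union_of_subset hSA, Set.disjoint_sdiff_left,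
      Set.diff_union_of_subset hNSB, Set.disjoint_sdiff_left, ?_, ?_⟩
    · rw [Set.ncard_diff hSA, Set.ncard_diff hNSB, hAB, le_antisymm hf2 hf1]
    · ext g
      simp only [Set.mem_setOf_eq, Set.mem_singleton_iff]
      constructor
      · rintro ⟨hgE, x, hx, y, hy, rfl⟩
        by_contra hne
        refine hx.2 ⟨y, hy, ?_⟩
        rw [SimpleGraph.deleteEdges_adj]
        refine ⟨((SimpleGraph.mem_edgeSet _).mp hgE).symm, ?_⟩
        intro hc
        rw [Set.mem_singleton_iff] at hc
        exact hne (Sym2.eq_swap.trans hc)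
      · rintro rfl
        exact ⟨he, p0, ⟨hp0B, hp0NS⟩, q0, hq0S, by rw [he_eq, Sym2.eq_swap]⟩
  · -- reverse direction
    rintro ⟨A0, A1, B0, B1, hAu, hAd, hBu, hBd, hcard01, hcross⟩ ⟨-, hMC'⟩
    have heX : e ∈ {f : Sym2 V | f ∈ H.edgeSet ∧ ∃ p ∈ B0, ∃ q ∈ A1, f = s(p, q)} := by
      rw [hcross]; rfl
    obtain ⟨-, p, hpB0, q, hqA1, he_pq⟩ := heX
    have hpq2 : H.Adj p q := (SimpleGraph.mem_edgeSet _).mp (he_pq ▸ he)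
    have hpB : p ∈ B := hBu ▸ Or.inl hpB0
    have hqA : q ∈ A := hAu ▸ Or.inr hqA1
    have hqX : q ∉ A0 ∪ B0 := by
      rintro (h | h)
      · exact (Set.disjoint_left.mp hAd h) hqA1
      · exact Set.disjoint_left.mp hbip.2.1 hqA (hBu ▸ Or.inl h)
    have hconn' := hMC'.2.1
    obtain ⟨x, y, hxy', hxX, hyX⟩ :
        ∃ x y : V, (H.deleteEdges {e}).Adj x y ∧ x ∈ A0 ∪ B0 ∧ y ∉ A0 ∪ B0 := by
      by_contra hno
      push_neg at hno
      obtain ⟨w⟩ := hconn'.preconnected p q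
      exact hqX (walk_stay (fun u v h hu => hno u v h hu) w (Or.inr hpB0))
    have hxy : H.Adj x y := (SimpleGraph.deleteEdges_adj.mp hxy').1
    have hxy_ne : s(x, y) ≠ e := by
      have := (SimpleGraph.deleteEdges_adj.mp hxy').2
      simpa using this
    rcases hxX with hxA0 | hxB0
    · -- x ∈ A0 : the counting contradiction
      have hxA : x ∈ A := hAu ▸ Or.inl hxA0
      have hyB : y ∈ B := (hbip.2.2 hxy).mp hxA
      have hyB0 : y ∉ B0 := fun h => hyX (Or.inr h)
      obtain ⟨M', hM', hgM⟩ := hMC'.2.2 s(x, y) ((SimpleGraph.mem_edgeSet _).mpr hxy')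
      obtain ⟨μ', h1', h2', hinv', hinj'⟩ := pm_partner hM'
      have hμx : μ' x = y := (h2' x y (SimpleGraph.Subgraph.mem_edgeSet.mp hgM)).symm
      have hmaps : ∀ u ∈ B0, μ' u ∈ A0 \ {x} := by
        intro u hu
        have hadj' : (H.deleteEdges {e}).Adj u (μ' u) := (h1' u).adj_sub
        have hadj : H.Adj u (μ' u) := (SimpleGraph.deleteEdges_adj.mp hadj').1
        have hne_e : s(u, μ' u) ≠ e := by
          have := (SimpleGraph.deleteEdges_adj.mp hadj').2
          simpa using this
        have huB : u ∈ B := hBu ▸ Or.inl hu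
        have hμA : μ' u ∈ A := (hbip.2.2 hadj.symm).mpr huB
        have hμ_notA1 : μ' u ∉ A1 := by
          intro hA1
          have hmem : s(u, μ' u) ∈
              {f : Sym2 V | f ∈ H.edgeSet ∧ ∃ p ∈ B0, ∃ q ∈ A1, f = s(p, q)} :=
            ⟨(SimpleGraph.mem_edgeSet _).mpr hadj, u, hu, μ' u, hA1, rfl⟩
          rw [hcross, Set.mem_singleton_iff] at hmem
          exact hne_e hmem
        have hμA0 : μ' u ∈ A0 := (hAu ▸ hμA : μ' u ∈ A0 ∪ A1).resolve_right hμ_notA1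
        refine ⟨hμA0, fun hc => ?_⟩
        rw [Set.mem_singleton_iff] at hc
        have huy : u = y := by
          have hadjx : M'.Adj x u := hc ▸ (h1' u).symm
          rw [h2' x u hadjx, hμx]
        exact hyB0 (huy ▸ hu)
      have hle : B0.ncard ≤ (A0 \ {x}).ncard :=
        Set.ncard_le_ncard_of_injOn μ' hmaps hinj'.injOn (Set.toFinite _)
      have h1 : (A0 \ {x}).ncard = A0.ncard - 1 := Set.ncard_diff_singleton_of_mem hxA0
      have hpos : 0 < B0.ncard := (Set.ncard_pos (Set.toFinite _)).mpr ⟨p, hpB0⟩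
      omega
    · -- x ∈ B0 : the crossing edge would be a second B0–A1 edge
      have hxB : x ∈ B := hBu ▸ Or.inl hxB0
      have hyA : y ∈ A := (hbip.2.2 hxy.symm).mpr hxB
      have hyA1 : y ∈ A1 := by
        have : y ∈ A0 ∪ A1 := hAu ▸ hyA
        rcases this with h | h
        · exact absurd (Or.inl h) hyX
        · exact h
      have hmem : s(x, y) ∈
          {f : Sym2 V | f ∈ H.edgeSet ∧ ∃ p ∈ B0, ∃ q ∈ A1, f = s(p, q)} :=
        ⟨(SimpleGraph.mem_edgeSet _).mpr hxy, x, hxB0, y, hyA1, rfl⟩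
      rw [hcross, Set.mem_singleton_iff] at hmem
      exact hxy_ne hmem
end

section
/- Let H be a simple bipartite matching covered graph, let Q be a 4-cycle of H, and let e and f be two nonadjacent (opposite) edges of Q. If f is admissible in H − e, then e is removable in H. -/
namespace Stmt11Aux

open SimpleGraph

variable {V : Type*}

/-- Bundle of hypotheses about the two matching involutions and a proper colouring. -/
structure Pairs (H : SimpleGraph V) (c : V → Prop) (σ τ : V → V) : Prop where
  hσ : Function.Involutive σ
  hτ : Function.Involutive τ
  hσadj : ∀ v, H.Adj v (σ v)
  hτadj : ∀ v, H.Adj v (τ v)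
  hc : ∀ u w, H.Adj u w → (c u ↔ ¬ c w)

/-- Build a perfect-matching subgraph of `G` out of a fixed-point-free involution whose
pairs are edges of `G`. -/
lemma pairing_matching (G : SimpleGraph V) (p : V → V)
    (hinv : Function.Involutive p) (hadj : ∀ v, G.Adj v (p v)) :
    ∃ M : G.Subgraph, M.IsPerfectMatching ∧ ∀ u w : V, (s(u, w) ∈ M.edgeSet ↔ p u = w) := by
  refine ⟨⟨Set.univ, fun u w => p u = w, ?_, ?_, ?_⟩, ⟨?_, fun v => Set.mem_univ v⟩, ?_⟩
  · intro u w h; exact h ▸ hadj u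
  · intro u w _; exact Set.mem_univ u
  · constructor
    intro u w h
    have := hinv u
    rw [h] at this
    exact this
  · intro v _
    exact ⟨p v, rfl, fun y hy => (show p v = y from hy).symm⟩
  · intro u w
    exact SimpleGraph.Subgraph.mem_edgeSet

/-- Extract the pairing involution of a perfect matching. -/
lemma pm_fun {G : SimpleGraph V} {M : G.Subgraph} (hM : M.IsPerfectMatching) :
    ∃ p : V → V, Function.Involutive p ∧ (∀ v, G.Adj v (p v)) ∧
      ∀ u w, (M.Adj u w ↔ p u = w) := by
  choose p hp hu using fun v => hM.1 (hM.2 v)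
  have hiff : ∀ u w, M.Adj u w ↔ p u = w :=
    fun u w => ⟨fun h => (hu u w h).symm, fun h => h ▸ hp u⟩
  refine ⟨p, fun v => ?_, fun v => M.adj_sub (hp v), hiff⟩
  exact (hu (p v) v ((hp v).symm)).symm

/-- The alternating walk determined by `σ` and `τ`, starting with a `σ`-step. -/
def wk (σ τ : V → V) (s : V) : ℕ → V
  | 0 => s
  | n + 1 => if Even n then σ (wk σ τ s n) else τ (wk σ τ s n)

lemma wk_zero (σ τ : V → V) (s : V) : wk σ τ s 0 = s := rfl

lemma wk_succ (σ τ : V → V) (s : V) (n : ℕ) :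
    wk σ τ s (n + 1) = if Even n then σ (wk σ τ s n) else τ (wk σ τ s n) := rfl

lemma wk_one {H : SimpleGraph V} {c : V → Prop} {σ τ : V → V} (_ : Pairs H c σ τ) (s : V) :
    wk σ τ s 1 = σ s := by
  rw [wk_succ, if_pos Even.zero, wk_zero]

section WalkLemmas

variable {H : SimpleGraph V} {c : V → Prop} {σ τ : V → V} (P : Pairs H c σ τ) {s : V}

include P

lemma wk_color (s : V) : ∀ n, (c (wk σ τ s n) ↔ (Even n ↔ c s)) := by
  intro n
  induction n with
  | zero => simp [wk_zero]
  | succ n ih =>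
    have hn1 : Even (n + 1) ↔ ¬ Even n := Nat.even_add_one
    rw [wk_succ]
    by_cases hn : Even n
    · have hcs := P.hc _ _ (P.hσadj (wk σ τ s n))
      rw [if_pos hn]
      tauto
    · have hcs := P.hc _ _ (P.hτadj (wk σ τ s n))
      rw [if_neg hn]
      tauto

lemma wk_parity {m n : ℕ} (h : wk σ τ s m = wk σ τ s n) : (Even m ↔ Even n) := by
  have h1 := wk_color P s m
  have h2 := wk_color P s n
  rw [h] at h1
  tauto

lemma wk_back {m n : ℕ} (h : wk σ τ s (m + 1) = wk σ τ s (n + 1)) :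
    wk σ τ s m = wk σ τ s n := by
  have hp : Even m ↔ Even n := by
    have := wk_parity P h
    simp only [Nat.even_add_one] at this
    tauto
  by_cases hm : Even m
  · have hn : Even n := hp.mp hm
    rw [wk_succ, wk_succ, if_pos hm, if_pos hn] at h
    exact P.hσ.injective h
  · have hn : ¬ Even n := fun h' => hm (hp.mpr h')
    rw [wk_succ, wk_succ, if_neg hm, if_neg hn] at h
    exact P.hτ.injective h

lemma wk_ret : ∀ m n, m < n → wk σ τ s m = wk σ τ s n → wk σ τ s (n - m) = s := by
  intro m
  induction m with
  | zero => intro n _ h; simpa [wk_zero] using h.symm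
  | succ m ih =>
    intro n hlt h
    obtain ⟨k, rfl⟩ : ∃ k, n = k + 1 := ⟨n - 1, by omega⟩
    have h' := wk_back P h
    have := ih k (by omega) h'
    simpa [Nat.succ_sub_succ] using this

lemma wk_per {p : ℕ} (hp : wk σ τ s p = s) : ∀ n, wk σ τ s (n + p) = wk σ τ s n := by
  have hpe : Even p := by
    have := wk_parity P (m := p) (n := 0) (by simpa [wk_zero] using hp)
    simpa using this
  intro n
  induction n with
  | zero => simpa [wk_zero] using hp
  | succ n ih =>
    have hrw : n + 1 + p = (n + p) + 1 := by omega
    rw [hrw, wk_succ, wk_succ]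
    have hpar : Even (n + p) ↔ Even n := by
      rw [Nat.even_add]
      tauto
    by_cases hn : Even n
    · rw [if_pos (hpar.mpr hn), if_pos hn, ih]
    · rw [if_neg (fun h => hn (hpar.mp h)), if_neg hn, ih]

lemma wk_exists_ret [Finite V] (s : V) : ∃ p, 0 < p ∧ wk σ τ s p = s := by
  obtain ⟨a, b, hab, h⟩ := Finite.exists_ne_map_eq_of_infinite (wk σ τ s)
  rcases Nat.lt_or_ge a b with hlt | hge
  · exact ⟨b - a, by omega, wk_ret P a b hlt h⟩
  · have hlt : b < a := by omega
    exact ⟨a - b, by omega, wk_ret P b a hlt h.symm⟩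

lemma mem_range_sigma {u : V} (h : u ∈ Set.range (wk σ τ s)) :
    σ u ∈ Set.range (wk σ τ s) := by
  obtain ⟨n, rfl⟩ := h
  by_cases hn : Even n
  · exact ⟨n + 1, by rw [wk_succ, if_pos hn]⟩
  · have hn0 : n ≠ 0 := fun h => hn (h ▸ Even.zero)
    obtain ⟨k, rfl⟩ : ∃ k, n = k + 1 := ⟨n - 1, by omega⟩
    have hk : Even k := by
      rcases Nat.even_or_odd k with h' | h'
      · exact h'
      · exact absurd (by simpa [Nat.even_add_one, Nat.not_even_iff_odd] using h') hn
    refine ⟨k, ?_⟩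
    rw [wk_succ, if_pos hk, P.hσ]

lemma mem_range_tau [Finite V] {u : V} (h : u ∈ Set.range (wk σ τ s)) :
    τ u ∈ Set.range (wk σ τ s) := by
  obtain ⟨n, rfl⟩ := h
  by_cases hn : Even n
  · rcases n with _ | k
    · -- n = 0 : use the return
      obtain ⟨p, hp0, hps⟩ := wk_exists_ret P s
      have hpe : Even p := by
        have := wk_parity P (m := p) (n := 0) (by simpa [wk_zero] using hps)
        simpa using this
      have hp2 : 2 ≤ p := by
        rcases hpe with ⟨r, hr⟩; omega
      obtain ⟨k, hk⟩ : ∃ k, p = k + 1 := ⟨p - 1, by omega⟩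
      have hkodd : ¬ Even k := by
        rw [hk] at hpe
        simpa [Nat.even_add_one] using hpe
      refine ⟨k, ?_⟩
      have : wk σ τ s p = τ (wk σ τ s k) := by rw [hk, wk_succ, if_neg hkodd]
      rw [wk_zero]
      have h2 : τ (wk σ τ s p) = wk σ τ s k := by rw [this, P.hτ]
      calc wk σ τ s k = τ (wk σ τ s p) := h2.symm
        _ = τ (wk σ τ s 0) := by rw [hps, wk_zero]
    · -- n = k+1 even, k odd
      have hkodd : ¬ Even k := by
        simpa [Nat.even_add_one] using hn
      refine ⟨k, ?_⟩
      have : wk σ τ s (k + 1) = τ (wk σ τ s k) := by rw [wk_succ, if_neg hkodd]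
      rw [this, P.hτ]
  · exact ⟨n + 1, by rw [wk_succ, if_neg hn]⟩

/-- From the existence of a hit of `{z2, z3}` to a first hit, which must be `z3` and at an
odd time. -/
lemma first_hit {a z2 z3 : V}
    (hτz : τ z2 = z3) (hcz2 : c z2 ↔ c a) (ha2 : a ≠ z2) (ha3 : a ≠ z3)
    (hs2 : σ a ≠ z2) (hs3 : σ a ≠ z3)
    (hhit : ∃ n, wk σ τ a n = z2 ∨ wk σ τ a n = z3) :
    ∃ t, ¬ Even t ∧ wk σ τ a t = z3 ∧
      ∀ m < t, ¬ (wk σ τ a m = z2 ∨ wk σ τ a m = z3) := by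
  classical
  set t := Nat.find hhit with htdef
  have hthit : wk σ τ a t = z2 ∨ wk σ τ a t = z3 := Nat.find_spec hhit
  have htmin : ∀ m < t, ¬ (wk σ τ a m = z2 ∨ wk σ τ a m = z3) :=
    fun m hm => Nat.find_min hhit hm
  have ht0 : t ≠ 0 := by
    intro h
    rw [h, wk_zero] at hthit
    tauto
  have ht1 : t ≠ 1 := by
    intro h
    rw [h, wk_one P] at hthit
    tauto
  have hτz3 : τ z3 = z2 := by rw [← hτz, P.hτ]
  have htodd : ¬ Even t := by
    intro hte
    obtain ⟨k, hk⟩ : ∃ k, t = k + 1 := ⟨t - 1, by omega⟩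
    have hkodd : ¬ Even k := by rw [hk] at hte; simpa [Nat.even_add_one] using hte
    have hstep : wk σ τ a t = τ (wk σ τ a k) := by rw [hk, wk_succ, if_neg hkodd]
    have hk' : wk σ τ a k = τ (wk σ τ a t) := by rw [hstep, P.hτ]
    refine htmin k (by omega) ?_
    rcases hthit with h | h
    · right; rw [hk', h, hτz]
    · left; rw [hk', h, hτz3]
  have htv3 : wk σ τ a t = z3 := by
    rcases hthit with h | h
    · exfalso
      have hcol := wk_color P a t
      rw [h] at hcol
      tauto
    · exact h
  exact ⟨t, htodd, htv3, htmin⟩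

/-- The core cycle-exchange flip: given the walk from `v0` first hits `v3` (at an odd time)
and `x` does not occur on the walk up to that time, there is a pairing containing the
`σ`-pair at `x` and avoiding the edge `s(v0, v1)`. -/
lemma flipCore {v0 v1 v3 x y : V}
    (hτne : ∀ v, s(v, τ v) ≠ s(v0, v1))
    (hσ01 : σ v0 = v1) (hA30 : H.Adj v3 v0) (h13 : v1 ≠ v3)
    (t : ℕ) (htv3 : wk σ τ v0 t = v3) (htodd : ¬ Even t)
    (htmin : ∀ m < t, wk σ τ v0 m ≠ v3)
    (hxy : σ x = y) (hx0 : x ≠ v0) (hx1 : x ≠ v1)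
    (hxS : ∀ i ≤ t, wk σ τ v0 i ≠ x) :
    ∃ p : V → V, Function.Involutive p ∧
      (∀ v, H.Adj v (p v) ∧ s(v, p v) ≠ s(v0, v1)) ∧ p x = y := by
  classical
  have h01 : v0 ≠ v1 := by
    have := (P.hσadj v0).ne
    rw [hσ01] at this
    exact this
  have h03 : v0 ≠ v3 := hA30.ne'
  have ht0 : t ≠ 0 := fun h => h03 (by rw [← htv3, h, wk_zero])
  have ht1 : t ≠ 1 := fun h => h13 (by rw [← htv3, h, wk_one P, hσ01])
  -- injectivity of the walk up to `t`
  have noinj : ∀ i j, i < j → j ≤ t → wk σ τ v0 i ≠ wk σ τ v0 j := by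
    intro i j hij hjt heq
    have hret := wk_ret P i j hij heq
    have hper := wk_per P hret
    have h1 : wk σ τ v0 ((t - (j - i)) + (j - i)) = wk σ τ v0 (t - (j - i)) := hper _
    rw [Nat.sub_add_cancel (by omega)] at h1
    exact htmin (t - (j - i)) (by omega) (by rw [← h1, htv3])
  set S : V → Prop := fun u => ∃ i ≤ t, wk σ τ v0 i = u with hSdef
  have hSv0 : S v0 := ⟨0, by omega, rfl⟩
  have hSv1 : S v1 := ⟨1, by omega, by rw [wk_one P, hσ01]⟩
  have hSv3 : S v3 := ⟨t, le_refl _, htv3⟩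
  have hxnS : ¬ S x := by
    rintro ⟨i, hi, hw⟩
    exact hxS i hi hw
  -- τ maps S \ {v0, v3} into itself
  have tauS : ∀ u, S u → u ≠ v0 → u ≠ v3 → (S (τ u) ∧ τ u ≠ v0 ∧ τ u ≠ v3) := by
    rintro u ⟨i, hi, rfl⟩ hu0 hu3
    have hi0 : i ≠ 0 := fun h => hu0 (by rw [h, wk_zero])
    have hit : i ≠ t := fun h => hu3 (by rw [h, htv3])
    by_cases hieven : Even i
    · -- i even, 2 ≤ i ≤ t-1 : τ u = wk (i-1)
      obtain ⟨k, rfl⟩ : ∃ k, i = k + 1 := ⟨i - 1, by omega⟩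
      have hkodd : ¬ Even k := by simpa [Nat.even_add_one] using hieven
      have hstep : wk σ τ v0 (k + 1) = τ (wk σ τ v0 k) := by rw [wk_succ, if_neg hkodd]
      have hτu : τ (wk σ τ v0 (k + 1)) = wk σ τ v0 k := by rw [hstep, P.hτ]
      refine ⟨⟨k, by omega, hτu.symm⟩, ?_, ?_⟩
      · rw [hτu]
        intro h
        have hk0 : k ≠ 0 := fun h' => hkodd (h' ▸ Even.zero)
        exact noinj 0 k (by omega) (by omega) (by rw [wk_zero, h])
      · rw [hτu]
        intro h
        exact noinj k t (by omega) (le_refl _) (by rw [h, htv3])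
    · -- i odd : τ u = wk (i+1), i+1 ≤ t-1
      have hstep : wk σ τ v0 (i + 1) = τ (wk σ τ v0 i) := by rw [wk_succ, if_neg hieven]
      have hi1t : i + 1 ≠ t := by
        intro h
        rw [← h] at htodd
        exact htodd (by simpa [Nat.even_add_one] using hieven)
      refine ⟨⟨i + 1, by omega, hstep⟩, ?_, ?_⟩
      · rw [← hstep]
        intro h
        exact noinj 0 (i + 1) (by omega) (by omega) (by rw [wk_zero, h])
      · rw [← hstep]
        intro h
        exact noinj (i + 1) t (by omega) (le_refl _) (by rw [h, htv3])
  -- σ reflects S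
  have sigS : ∀ u, S (σ u) → S u := by
    rintro u ⟨i, hi, hw⟩
    have hu : u = σ (wk σ τ v0 i) := by rw [hw, P.hσ]
    by_cases hieven : Even i
    · have hstep : wk σ τ v0 (i + 1) = σ (wk σ τ v0 i) := by rw [wk_succ, if_pos hieven]
      have hit : i ≠ t := fun h => htodd (h ▸ hieven)
      exact ⟨i + 1, by omega, by rw [hstep, ← hu]⟩
    · have hi0 : i ≠ 0 := fun h => hieven (h ▸ Even.zero)
      obtain ⟨k, rfl⟩ : ∃ k, i = k + 1 := ⟨i - 1, by omega⟩
      have hkeven : Even k := by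
        rcases Nat.even_or_odd k with h' | h'
        · exact h'
        · exact absurd (by simpa [Nat.even_add_one, Nat.not_even_iff_odd] using h') hieven
      have hstep : wk σ τ v0 (k + 1) = σ (wk σ τ v0 k) := by rw [wk_succ, if_pos hkeven]
      exact ⟨k, by omega, by rw [hu, hstep, P.hσ]⟩
  have signS : ∀ u, ¬ S u → ¬ S (σ u) := fun u h hs => h (sigS u hs)
  -- the new pairing
  set ν : V → V := fun u =>
    if u = v0 then v3 else if u = v3 then v0 else if S u then τ u else σ u with hν
  have hν0 : ν v0 = v3 := by rw [hν]; simp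
  have hν3 : ν v3 = v0 := by rw [hν]; simp [h03.symm]
  have hνS : ∀ u, u ≠ v0 → u ≠ v3 → S u → ν u = τ u := by
    intro u h0 h3 hS
    rw [hν]; simp [h0, h3, hS]
  have hνn : ∀ u, u ≠ v0 → u ≠ v3 → ¬ S u → ν u = σ u := by
    intro u h0 h3 hS
    rw [hν]; simp [h0, h3, hS]
  have hinv : Function.Involutive ν := by
    intro u
    by_cases h0 : u = v0
    · rw [h0, hν0, hν3]
    · by_cases h3 : u = v3
      · rw [h3, hν3, hν0]
      · by_cases hS : S u
        · obtain ⟨hS', hτ0, hτ3⟩ := tauS u hS h0 h3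
          rw [hνS u h0 h3 hS, hνS (τ u) hτ0 hτ3 hS', P.hτ]
        · have hσnS : ¬ S (σ u) := signS u hS
          have hσ0 : σ u ≠ v0 := fun h => hσnS (h ▸ hSv0)
          have hσ3 : σ u ≠ v3 := fun h => hσnS (h ▸ hSv3)
          rw [hνn u h0 h3 hS, hνn (σ u) hσ0 hσ3 hσnS, P.hσ]
  refine ⟨ν, hinv, ?_, ?_⟩
  · intro v
    by_cases h0 : v = v0
    · subst h0
      rw [hν0]
      refine ⟨hA30.symm, ?_⟩
      intro h
      rcases Sym2.eq_iff.1 h with ⟨_, h2⟩ | ⟨h1, _⟩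
      · exact h13 h2.symm
      · exact h01 h1
    · by_cases h3 : v = v3
      · subst h3
        rw [hν3]
        refine ⟨hA30, ?_⟩
        intro h
        rcases Sym2.eq_iff.1 h with ⟨h1, _⟩ | ⟨h1, _⟩
        · exact h03 h1.symm
        · exact h13 h1.symm
      · by_cases hS : S v
        · rw [hνS v h0 h3 hS]
          exact ⟨P.hτadj v, hτne v⟩
        · rw [hνn v h0 h3 hS]
          refine ⟨P.hσadj v, ?_⟩
          intro h
          rcases Sym2.eq_iff.1 h with ⟨h1, _⟩ | ⟨h1, _⟩
          · exact h0 h1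
          · exact hS (h1 ▸ hSv1)
  · have hx3 : x ≠ v3 := fun h => hxnS (h ▸ hSv3)
    rw [hνn x hx0 hx3 hxnS, hxy]

end WalkLemmas

end Stmt11Aux
namespace Stmt11Aux

open SimpleGraph

variable {V : Type*}

lemma main_can [Fintype V] (H : SimpleGraph V)
    (hMC : MatchingCovered H) (hbip : BipartiteGraph H)
    (v0 v1 v2 v3 : V) (hQ : Is4Cycle H v0 v1 v2 v3)
    (hadm : ∃ M : (H.deleteEdges {s(v0, v1)}).Subgraph,
      M.IsPerfectMatching ∧ s(v2, v3) ∈ M.edgeSet) :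
    RemovableEdge H s(v0, v1) := by
  classical
  obtain ⟨d01, d02, d03, d12, d13, d23, a01, a12, a23, a30⟩ := hQ
  obtain ⟨A, B, hABu, hABd, hABadj⟩ := hbip
  set c : V → Prop := fun v => v ∈ A with hcdef
  have hcadj : ∀ u w, H.Adj u w → (c u ↔ ¬ c w) := by
    intro u w h
    have h1 := hABadj h
    have h2 : ∀ z : V, z ∈ B ↔ ¬ z ∈ A := by
      intro z
      constructor
      · intro hz ha
        exact Set.disjoint_left.1 hABd ha hz
      · intro hz
        have : z ∈ A ∪ B := hABu ▸ Set.mem_univ z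
        rcases this with h' | h'
        · exact absurd h' hz
        · exact h'
    rw [h2 w] at h1
    exact h1
  obtain ⟨M', hM'pm, hM'f⟩ := hadm
  obtain ⟨τ, hτinv, hτadjD, hτiff⟩ := pm_fun hM'pm
  have hτadj : ∀ v, H.Adj v (τ v) := fun v => ((SimpleGraph.deleteEdges_adj).1 (hτadjD v)).1
  have hτne : ∀ v, s(v, τ v) ≠ s(v0, v1) := by
    intro v
    have := ((SimpleGraph.deleteEdges_adj).1 (hτadjD v)).2
    simpa using this
  have hτ23 : τ v2 = v3 := (hτiff v2 v3).1 (SimpleGraph.Subgraph.mem_edgeSet.1 hM'f)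
  have hτ32 : τ v3 = v2 := by rw [← hτ23, hτinv]
  -- connectivity of H - e
  have hconnH : H.Connected := hMC.2.1
  have hconn : (H.deleteEdges {s(v0, v1)}).Connected := by
    have hne01 : s(v0, v3) ≠ s(v0, v1) := by
      intro h
      rcases Sym2.eq_iff.1 h with ⟨_, h2⟩ | ⟨h1, _⟩
      · exact d13 h2.symm
      · exact d01 h1
    have hne32 : s(v3, v2) ≠ s(v0, v1) := by
      intro h
      rcases Sym2.eq_iff.1 h with ⟨h1, _⟩ | ⟨_, h2⟩
      · exact d03 h1.symm
      · exact d02 h2.symm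
    have hne21 : s(v2, v1) ≠ s(v0, v1) := by
      intro h
      rcases Sym2.eq_iff.1 h with ⟨h1, _⟩ | ⟨h1, _⟩
      · exact d02 h1.symm
      · exact d12 h1.symm
    have hr01 : (H.deleteEdges {s(v0, v1)}).Reachable v0 v1 := by
      have e1 : (H.deleteEdges {s(v0, v1)}).Adj v0 v3 :=
        SimpleGraph.deleteEdges_adj.2 ⟨a30.symm, by simpa using hne01⟩
      have e2 : (H.deleteEdges {s(v0, v1)}).Adj v3 v2 :=
        SimpleGraph.deleteEdges_adj.2 ⟨a23.symm, by simpa using hne32⟩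
      have e3 : (H.deleteEdges {s(v0, v1)}).Adj v2 v1 :=
        SimpleGraph.deleteEdges_adj.2 ⟨a12.symm, by simpa using hne21⟩
      exact (e1.reachable.trans e2.reachable).trans e3.reachable
    have hstep : ∀ a b : V, H.Adj a b → (H.deleteEdges {s(v0, v1)}).Reachable a b := by
      intro a b hab
      by_cases h : s(a, b) = s(v0, v1)
      · rcases Sym2.eq_iff.1 h with ⟨h1, h2⟩ | ⟨h1, h2⟩
        · rw [h1, h2]; exact hr01
        · rw [h1, h2]; exact hr01.symm
      · exact (SimpleGraph.deleteEdges_adj.2 ⟨hab, by simpa using h⟩).reachable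
    have hlift : ∀ u w : V, H.Reachable u w → (H.deleteEdges {s(v0, v1)}).Reachable u w := by
      intro u w h
      obtain ⟨pw⟩ := h
      induction pw with
      | nil => exact SimpleGraph.Reachable.refl _
      | cons hadj _ ih => exact (hstep _ _ hadj).trans ih
    have : Nonempty V := hconnH.nonempty
    exact ⟨fun u w => hlift u w (hconnH.preconnected u w)⟩
  refine ⟨(SimpleGraph.mem_edgeSet H).mpr a01, hMC.1, hconn, ?_⟩
  -- admissibility of each remaining edge
  intro g hg
  induction g using Sym2.ind with
  | _ x y =>
  have hgD : (H.deleteEdges {s(v0, v1)}).Adj x y := (SimpleGraph.mem_edgeSet _).1 hg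
  have hgH : H.Adj x y := (SimpleGraph.deleteEdges_adj.1 hgD).1
  have hgne : s(x, y) ≠ s(v0, v1) := by
    have := (SimpleGraph.deleteEdges_adj.1 hgD).2
    simpa using this
  by_cases hτxy : τ x = y
  · exact ⟨M', hM'pm, SimpleGraph.Subgraph.mem_edgeSet.2 ((hτiff x y).2 hτxy)⟩
  obtain ⟨N, hNpm, hNg⟩ := hMC.2.2 s(x, y) hgH
  obtain ⟨σ, hσinv, hσadj, hσiff⟩ := pm_fun hNpm
  have hσxy : σ x = y := (hσiff x y).1 (SimpleGraph.Subgraph.mem_edgeSet.1 hNg)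
  have P : Pairs H c σ τ := ⟨hσinv, hτinv, hσadj, hτadj, hcadj⟩
  suffices hfin : ∃ p : V → V, Function.Involutive p ∧
      (∀ v, H.Adj v (p v) ∧ s(v, p v) ≠ s(v0, v1)) ∧ p x = y by
    obtain ⟨p, h1, h2, h3⟩ := hfin
    obtain ⟨M, hMpm, hMedge⟩ := pairing_matching (H.deleteEdges {s(v0, v1)}) p h1
      (fun v => SimpleGraph.deleteEdges_adj.2 ⟨(h2 v).1, by simpa using (h2 v).2⟩)
    exact ⟨M, hMpm, (hMedge x y).2 h3⟩
  by_cases hσ01 : σ v0 = v1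
  swap
  · -- e is not in N : N itself works
    refine ⟨σ, hσinv, fun v => ⟨hσadj v, ?_⟩, hσxy⟩
    intro h
    rcases Sym2.eq_iff.1 h with ⟨h1, h2⟩ | ⟨h1, h2⟩
    · exact hσ01 (h1 ▸ h2)
    · apply hσ01
      rw [← h2, hσinv, h1]
  -- now σ v0 = v1
  have hσ10 : σ v1 = v0 := by rw [← hσ01, hσinv]
  have hx0 : x ≠ v0 := by
    intro h
    apply hgne
    rw [h, ← hσxy, h, hσ01]
  have hx1 : x ≠ v1 := by
    intro h
    apply hgne
    rw [h, ← hσxy, h, hσ10, Sym2.eq_swap]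
  by_cases hhit : ∃ n, wk σ τ v0 n = v2 ∨ wk σ τ v0 n = v3
  swap
  · -- the walk from v0 never meets {v2, v3}
    push_neg at hhit
    set R : V → Prop := fun u => u ∈ Set.range (wk σ τ v0) with hRdef
    have hRv2 : ¬ R v2 := by
      rintro ⟨n, hn⟩
      exact (hhit n).1 hn
    have hRv3 : ¬ R v3 := by
      rintro ⟨n, hn⟩
      exact (hhit n).2 hn
    have hRσ : ∀ u, R u → R (σ u) := fun u h => mem_range_sigma P h
    have hRτ : ∀ u, R u → R (τ u) := fun u h => mem_range_tau P h
    have hRσ' : ∀ u, R (σ u) → R u := by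
      intro u h
      have := hRσ _ h
      rwa [hσinv u] at this
    have hRτ' : ∀ u, R (τ u) → R u := by
      intro u h
      have := hRτ _ h
      rwa [hτinv u] at this
    have hRv0 : R v0 := ⟨0, rfl⟩
    have hRv1 : R v1 := ⟨1, by rw [wk_one P, hσ01]⟩
    by_cases hxR : R x
    · -- quadrilateral reroute
      set μ : V → V := fun u =>
        if u = v0 then v3 else if u = v1 then v2 else if u = v2 then v1 else
          if u = v3 then v0 else if R u then σ u else τ u with hμdef
      have hμ0 : μ v0 = v3 := by rw [hμdef]; simp
      have hμ1 : μ v1 = v2 := by rw [hμdef]; simp [d01.symm]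
      have hμ2 : μ v2 = v1 := by rw [hμdef]; simp [d02.symm, d12.symm]
      have hμ3 : μ v3 = v0 := by rw [hμdef]; simp [d03.symm, d13.symm, d23.symm]
      have hμR : ∀ u, u ≠ v0 → u ≠ v1 → u ≠ v2 → u ≠ v3 → R u → μ u = σ u := by
        intro u h0 h1 h2 h3 hR
        rw [hμdef]; simp [h0, h1, h2, h3, hR]
      have hμn : ∀ u, u ≠ v0 → u ≠ v1 → u ≠ v2 → u ≠ v3 → ¬ R u → μ u = τ u := by
        intro u h0 h1 h2 h3 hR
        rw [hμdef]; simp [h0, h1, h2, h3, hR]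
      have hxq : x ≠ v2 := fun h => hRv2 (h ▸ hxR)
      have hxq3 : x ≠ v3 := fun h => hRv3 (h ▸ hxR)
      have hinv : Function.Involutive μ := by
        intro u
        by_cases h0 : u = v0
        · rw [h0, hμ0, hμ3]
        by_cases h1 : u = v1
        · rw [h1, hμ1, hμ2]
        by_cases h2 : u = v2
        · rw [h2, hμ2, hμ1]
        by_cases h3 : u = v3
        · rw [h3, hμ3, hμ0]
        by_cases hR : R u
        · have hs0 : σ u ≠ v0 := by
            intro h
            apply h1
            rw [← hσinv u, h, hσ01]
          have hs1 : σ u ≠ v1 := by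
            intro h
            apply h0
            rw [← hσinv u, h, hσ10]
          have hs2 : σ u ≠ v2 := fun h => hRv2 (h ▸ hRσ u hR)
          have hs3 : σ u ≠ v3 := fun h => hRv3 (h ▸ hRσ u hR)
          rw [hμR u h0 h1 h2 h3 hR, hμR (σ u) hs0 hs1 hs2 hs3 (hRσ u hR), hσinv]
        · have ht0 : τ u ≠ v0 := fun h => hR (hRτ' u (h ▸ hRv0))
          have ht1 : τ u ≠ v1 := fun h => hR (hRτ' u (h ▸ hRv1))
          have ht2 : τ u ≠ v2 := by
            intro h
            apply h3
            rw [← hτinv u, h, hτ23]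
          have ht3 : τ u ≠ v3 := by
            intro h
            apply h2
            rw [← hτinv u, h, hτ32]
          have htR : ¬ R (τ u) := fun h => hR (hRτ' u h)
          rw [hμn u h0 h1 h2 h3 hR, hμn (τ u) ht0 ht1 ht2 ht3 htR, hτinv]
      refine ⟨μ, hinv, ?_, ?_⟩
      · intro v
        by_cases h0 : v = v0
        · rw [h0, hμ0]
          refine ⟨a30.symm, ?_⟩
          intro h
          rcases Sym2.eq_iff.1 h with ⟨_, h'⟩ | ⟨h', _⟩
          · exact d13 h'.symm
          · exact d01 h'
        by_cases h1 : v = v1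
        · rw [h1, hμ1]
          refine ⟨a12, ?_⟩
          intro h
          rcases Sym2.eq_iff.1 h with ⟨h', _⟩ | ⟨_, h'⟩
          · exact d01 h'.symm
          · exact d02 h'.symm
        by_cases h2 : v = v2
        · rw [h2, hμ2]
          refine ⟨a12.symm, ?_⟩
          intro h
          rcases Sym2.eq_iff.1 h with ⟨h', _⟩ | ⟨h', _⟩
          · exact d02 h'.symm
          · exact d12 h'.symm
        by_cases h3 : v = v3
        · rw [h3, hμ3]
          refine ⟨a30, ?_⟩
          intro h
          rcases Sym2.eq_iff.1 h with ⟨h', _⟩ | ⟨h', _⟩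
          · exact d03 h'.symm
          · exact d13 h'.symm
        by_cases hR : R v
        · rw [hμR v h0 h1 h2 h3 hR]
          refine ⟨hσadj v, ?_⟩
          intro h
          rcases Sym2.eq_iff.1 h with ⟨h', _⟩ | ⟨h', _⟩
          · exact h0 h'
          · exact h1 h'
        · rw [hμn v h0 h1 h2 h3 hR]
          exact ⟨hτadj v, hτne v⟩
      · rw [hμR x hx0 hx1 hxq hxq3 hxR, hσxy]
    · -- flip the whole component
      set ν : V → V := fun u => if R u then τ u else σ u with hνdef
      have hinv : Function.Involutive ν := by
        intro u
        by_cases hR : R u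
        · have : R (τ u) := hRτ u hR
          rw [hνdef]
          simp only [if_pos hR, if_pos this]
          exact hτinv u
        · have : ¬ R (σ u) := fun h => hR (hRσ' u h)
          rw [hνdef]
          simp only [if_neg hR, if_neg this]
          exact hσinv u
      refine ⟨ν, hinv, ?_, ?_⟩
      · intro v
        by_cases hR : R v
        · rw [hνdef]
          simp only [if_pos hR]
          exact ⟨hτadj v, hτne v⟩
        · rw [hνdef]
          simp only [if_neg hR]
          refine ⟨hσadj v, ?_⟩
          intro h
          rcases Sym2.eq_iff.1 h with ⟨h', _⟩ | ⟨h', _⟩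
          · exact hR (h' ▸ hRv0)
          · exact hR (h' ▸ hRv1)
      · rw [hνdef]
        simp only [if_neg hxR]
        exact hσxy
  -- the walk from v0 meets {v2, v3}
  have hc01 : c v0 ↔ ¬ c v1 := hcadj v0 v1 a01
  have hc12 : c v1 ↔ ¬ c v2 := hcadj v1 v2 a12
  have hc23 : c v2 ↔ ¬ c v3 := hcadj v2 v3 a23
  obtain ⟨t, htodd, htv3, htmin⟩ := first_hit P hτ23 (by tauto) d02 d03
    (by rw [hσ01]; exact d12) (by rw [hσ01]; exact d13) hhit
  by_cases hxS : ∀ i ≤ t, wk σ τ v0 i ≠ x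
  · exact flipCore P hτne hσ01 a30 d13 t htv3 htodd
      (fun m hm h => htmin m hm (Or.inr h)) hσxy hx0 hx1 hxS
  · push_neg at hxS
    obtain ⟨i0, hi0t, hwi0⟩ := hxS
    have hi02 : 2 ≤ i0 := by
      rcases Nat.lt_or_ge i0 2 with h | h
      · interval_cases i0
        · exact absurd (by rw [← hwi0, wk_zero]) (Ne.symm hx0)
        · exact absurd (by rw [← hwi0, wk_one P, hσ01]) (Ne.symm hx1)
      · exact h
    -- the period of the walk from v0
    obtain ⟨p, hppos, hp, hpmin⟩ :
        ∃ p, 0 < p ∧ wk σ τ v0 p = v0 ∧ ∀ m, 0 < m → m < p → wk σ τ v0 m ≠ v0 := by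
      obtain ⟨p0, hp0pos, hp0⟩ := wk_exists_ret P (s := v0)
      have hret : ∃ n, wk σ τ v0 (n + 1) = v0 :=
        ⟨p0 - 1, by rw [Nat.sub_add_cancel hp0pos]; exact hp0⟩
      refine ⟨Nat.find hret + 1, by omega, Nat.find_spec hret, ?_⟩
      intro m h1 h2 hm
      have := Nat.find_min hret (m := m - 1) (by omega)
      rw [Nat.sub_add_cancel h1] at this
      exact this hm
    have hpe : Even p := by
      have := wk_parity P (s := v0) (m := p) (n := 0) (by rw [hp, wk_zero])
      simpa using this
    have hpt : t < p := by
      by_contra hle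
      push_neg at hle
      have hper := wk_per P hp
      have h1 : wk σ τ v0 ((t - p) + p) = wk σ τ v0 (t - p) := hper _
      rw [Nat.sub_add_cancel hle] at h1
      exact htmin (t - p) (by omega) (Or.inr (by rw [← h1, htv3]))
    -- correspondence between the walk from v1 and the reversed walk from v0
    have corr : ∀ k ≤ p, wk σ τ v1 (k + 1) = wk σ τ v0 (p - k) := by
      intro k
      induction k with
      | zero =>
        intro _
        rw [Nat.sub_zero, hp, wk_one P, hσ10]
      | succ k ih =>
        intro hk1p
        have ihh := ih (by omega)
        have hpar : Even (p - (k + 1)) ↔ Even (k + 1) := by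
          rw [Nat.even_sub hk1p]
          exact ⟨fun h => h.mp hpe, fun h => iff_of_true hpe h⟩
        have hrw : p - k = (p - (k + 1)) + 1 := by omega
        by_cases hek : Even (k + 1)
        · rw [wk_succ, if_pos hek, ihh, hrw, wk_succ, if_pos (hpar.mpr hek), hσinv]
        · rw [wk_succ, if_neg hek, ihh, hrw, wk_succ, if_neg (fun h => hek (hpar.mp h)), hτinv]
    have hwt1 : wk σ τ v0 (t + 1) = v2 := by
      rw [wk_succ, if_neg htodd, htv3, hτ32]
    have hhit1 : ∃ n, wk σ τ v1 n = v3 ∨ wk σ τ v1 n = v2 := by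
      refine ⟨p - t, Or.inr ?_⟩
      have h1 := corr (p - t - 1) (by omega)
      rw [show p - (p - t - 1) = t + 1 by omega] at h1
      rw [show p - t = (p - t - 1) + 1 by omega, h1, hwt1]
    obtain ⟨t', ht'odd, ht'v2, ht'min⟩ := first_hit P hτ32 (by tauto) d13 d12
      (by rw [hσ10]; exact d03) (by rw [hσ10]; exact d02) hhit1
    have ht'le : t' ≤ p - t := by
      by_contra hgt
      push_neg at hgt
      refine ht'min (p - t) hgt (Or.inr ?_)
      have h1 := corr (p - t - 1) (by omega)
      rw [show p - (p - t - 1) = t + 1 by omega] at h1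
      rw [show p - t = (p - t - 1) + 1 by omega, h1, hwt1]
    have hxS' : ∀ i ≤ t', wk σ τ v1 i ≠ x := by
      intro i hi hxeq
      rcases i with _ | j
      · rw [wk_zero] at hxeq
        exact hx1 hxeq.symm
      · have hjp : j ≤ p := by omega
        have h1 := corr j hjp
        rw [hxeq] at h1
        -- x = wk v0 (p - j), with i0 < p - j
        have hlt : i0 < p - j := by omega
        have heq : wk σ τ v0 i0 = wk σ τ v0 (p - j) := by rw [hwi0, h1]
        have hd := wk_ret P i0 (p - j) hlt heq
        exact hpmin (p - j - i0) (by omega) (by omega) hd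
    have hτne' : ∀ v, s(v, τ v) ≠ s(v1, v0) := by
      intro v
      rw [show s(v1, v0) = s(v0, v1) from Sym2.eq_swap]
      exact hτne v
    obtain ⟨pm, h1, h2, h3⟩ := flipCore P hτne' hσ10 a12.symm d02 t' ht'v2 ht'odd
      (fun m hm h => ht'min m hm (Or.inr h)) hσxy hx1 hx0 hxS'
    refine ⟨pm, h1, ?_, h3⟩
    intro v
    refine ⟨(h2 v).1, ?_⟩
    rw [show s(v0, v1) = s(v1, v0) from Sym2.eq_swap]
    exact (h2 v).2

end Stmt11Aux
/-- in a quadrilateral, if an opposite edge is admissible after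
deleting `e`, then `e` is removable. -/
theorem stmt11 {V : Type*} [Fintype V] (H : SimpleGraph V)
    (hMC : MatchingCovered H) (hbip : BipartiteGraph H)
    (v0 v1 v2 v3 : V) (hQ : Is4Cycle H v0 v1 v2 v3)
    (e f : Sym2 V)
    (he : e ∈ ({s(v0, v1), s(v1, v2), s(v2, v3), s(v3, v0)} : Set (Sym2 V)))
    (hf : f ∈ ({s(v0, v1), s(v1, v2), s(v2, v3), s(v3, v0)} : Set (Sym2 V)))
    (hdisj : ∀ x : V, x ∈ e → x ∉ f)
    (hadm : ∃ M : (H.deleteEdges {e}).Subgraph,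
      M.IsPerfectMatching ∧ f ∈ M.edgeSet) :
    RemovableEdge H e := by
  obtain ⟨d01, d02, d03, d12, d13, d23, a01, a12, a23, a30⟩ := hQ
  have hQ0 : Is4Cycle H v0 v1 v2 v3 := ⟨d01, d02, d03, d12, d13, d23, a01, a12, a23, a30⟩
  have hQ1 : Is4Cycle H v1 v2 v3 v0 :=
    ⟨d12, d13, d01.symm, d23, d02.symm, d03.symm, a12, a23, a30, a01⟩
  have hQ2 : Is4Cycle H v2 v3 v0 v1 :=
    ⟨d23, d02.symm, d12.symm, d03.symm, d13.symm, d01, a23, a30, a01, a12⟩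
  have hQ3 : Is4Cycle H v3 v0 v1 v2 :=
    ⟨d03.symm, d13.symm, d23.symm, d01, d02, d12, a30, a01, a12, a23⟩
  simp only [Set.mem_insert_iff, Set.mem_singleton_iff] at he hf
  rcases he with he | he | he | he <;> subst he <;>
    rcases hf with hf | hf | hf | hf <;> subst hf
  · exact (hdisj v0 (by simp) (by simp)).elim
  · exact (hdisj v1 (by simp) (by simp)).elim
  · exact Stmt11Aux.main_can H hMC hbip v0 v1 v2 v3 hQ0 hadm
  · exact (hdisj v0 (by simp) (by simp)).elim
  · exact (hdisj v1 (by simp) (by simp)).elim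
  · exact (hdisj v1 (by simp) (by simp)).elim
  · exact (hdisj v2 (by simp) (by simp)).elim
  · exact Stmt11Aux.main_can H hMC hbip v1 v2 v3 v0 hQ1 hadm
  · exact Stmt11Aux.main_can H hMC hbip v2 v3 v0 v1 hQ2 hadm
  · exact (hdisj v2 (by simp) (by simp)).elim
  · exact (hdisj v2 (by simp) (by simp)).elim
  · exact (hdisj v3 (by simp) (by simp)).elim
  · exact (hdisj v0 (by simp) (by simp)).elim
  · exact Stmt11Aux.main_can H hMC hbip v3 v0 v1 v2 hQ3 hadm
  · exact (hdisj v3 (by simp) (by simp)).elim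
  · exact (hdisj v3 (by simp) (by simp)).elim
end

section
/- Let H be a simple bipartite matching covered graph and let e be a removable edge of H. If f is a removable edge of the matching covered graph H − e, then: (i) f is a removable edge of H, and (ii) e is a removable edge of H − f. -/
section Aux

open SimpleGraph

variable {V : Type*}

/-- The partner of a vertex in a perfect matching. -/
noncomputable def pmPartner {G : SimpleGraph V} {M : G.Subgraph}
    (hM : M.IsPerfectMatching) (v : V) : V :=
  ((SimpleGraph.Subgraph.isPerfectMatching_iff).mp hM v).choose

lemma pmPartner_adj {G : SimpleGraph V} {M : G.Subgraph}
    (hM : M.IsPerfectMatching) (v : V) : M.Adj v (pmPartner hM v) :=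
  ((SimpleGraph.Subgraph.isPerfectMatching_iff).mp hM v).choose_spec.1

lemma pmPartner_eq {G : SimpleGraph V} {M : G.Subgraph}
    (hM : M.IsPerfectMatching) {v w : V} (h : M.Adj v w) : w = pmPartner hM v :=
  ((SimpleGraph.Subgraph.isPerfectMatching_iff).mp hM v).choose_spec.2 w h

lemma pmPartner_injective {G : SimpleGraph V} {M : G.Subgraph}
    (hM : M.IsPerfectMatching) : Function.Injective (pmPartner hM) := by
  intro u v h
  have hu : M.Adj (pmPartner hM v) u := by
    rw [← h]; exact (pmPartner_adj hM u).symm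
  have hv : M.Adj (pmPartner hM v) v := (pmPartner_adj hM v).symm
  exact (pmPartner_eq hM hu).trans (pmPartner_eq hM hv).symm

lemma walk_exists_adj {G : SimpleGraph V} {u v : V} (w : G.Walk u v) (h : u ≠ v) :
    ∃ a b, G.Adj a b := by
  cases w with
  | nil => exact absurd rfl h
  | cons h' _ => exact ⟨_, _, h'⟩

lemma mc_exists_pm [Fintype V] {G : SimpleGraph V} (h : MatchingCovered G) :
    ∃ M : G.Subgraph, M.IsPerfectMatching := by
  obtain ⟨hcard, hconn, hedge⟩ := h
  have h1 : 1 < Fintype.card V := by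
    have := Nat.card_eq_fintype_card (α := V); omega
  obtain ⟨u, v, huv⟩ := Fintype.exists_pair_of_one_lt_card h1
  obtain ⟨w⟩ := hconn.preconnected u v
  obtain ⟨a, b, hab⟩ := walk_exists_adj w huv
  obtain ⟨M, hM, -⟩ := hedge s(a, b) ((SimpleGraph.mem_edgeSet _).mpr hab)
  exact ⟨M, hM⟩

lemma bipartition_ncard_eq [Fintype V] {G : SimpleGraph V} {A B : Set V}
    (hAB : A ∪ B = Set.univ) (hdisj : Disjoint A B)
    (hadj : ∀ ⦃u v : V⦄, G.Adj u v → (u ∈ A ↔ v ∈ B))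
    (hpm : ∃ M : G.Subgraph, M.IsPerfectMatching) : A.ncard = B.ncard := by
  obtain ⟨M, hM⟩ := hpm
  have hadjp : ∀ v, G.Adj v (pmPartner hM v) := fun v => M.adj_sub (pmPartner_adj hM v)
  have hAtoB : ∀ a ∈ A, pmPartner hM a ∈ B := fun a ha => (hadj (hadjp a)).mp ha
  have hBtoA : ∀ b ∈ B, pmPartner hM b ∈ A := by
    intro b hb
    have hbA : b ∉ A := fun h => hdisj.ne_of_mem h hb rfl
    have h1 : pmPartner hM b ∉ B := fun h => hbA ((hadj (hadjp b)).mpr h)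
    have h2 : pmPartner hM b ∈ A ∪ B := hAB ▸ Set.mem_univ _
    exact h2.resolve_right h1
  exact le_antisymm
    (Set.ncard_le_ncard_of_injOn _ hAtoB (pmPartner_injective hM).injOn (Set.toFinite _))
    (Set.ncard_le_ncard_of_injOn _ hBtoA (pmPartner_injective hM).injOn (Set.toFinite _))

/-- Surplus lemma: in a bipartite matching covered graph, every nonempty subset
of one colour class avoiding some vertex of that class has at least `|S| + 1`
neighbours. -/
lemma surplus [Fintype V] [DecidableEq V] {G : SimpleGraph V} [DecidableRel G.Adj]
    {A B : Set V}
    (hAB : A ∪ B = Set.univ) (hdisj : Disjoint A B)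
    (hadj : ∀ ⦃u v : V⦄, G.Adj u v → (u ∈ A ↔ v ∈ B))
    (hmc : MatchingCovered G)
    {S : Finset V} (hS : S.Nonempty) (hSA : ↑S ⊆ A)
    {x : V} (hx : x ∈ A) (hxS : x ∉ S) :
    S.card + 1 ≤ (S.biUnion fun a => G.neighborFinset a).card := by
  set N : Finset V := S.biUnion fun a => G.neighborFinset a with hN
  have hNB : ∀ v ∈ N, v ∈ B := by
    intro v hv
    obtain ⟨a, ha, hva⟩ := Finset.mem_biUnion.mp hv
    exact (hadj ((SimpleGraph.mem_neighborFinset _ _ _).mp hva)).mp (hSA ha)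
  obtain ⟨M, hM⟩ := mc_exists_pm hmc
  have hmem : ∀ a ∈ S, pmPartner hM a ∈ N := by
    intro a ha
    exact Finset.mem_biUnion.mpr ⟨a, ha,
      (SimpleGraph.mem_neighborFinset _ _ _).mpr (M.adj_sub (pmPartner_adj hM a))⟩
  have hle : S.card ≤ N.card :=
    Finset.card_le_card_of_injOn _ hmem (pmPartner_injective hM).injOn
  by_contra hcon
  -- find a crossing edge
  set T : Set V := ↑S ∪ ↑N with hT
  have hxT : x ∉ T := by
    rintro (h | h)
    · exact hxS (Finset.mem_coe.mp h)
    · exact hdisj.ne_of_mem hx (hNB x (Finset.mem_coe.mp h)) rfl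
  obtain ⟨a0, ha0⟩ := hS
  have ha0T : a0 ∈ T := Or.inl (Finset.mem_coe.mpr ha0)
  obtain ⟨w⟩ := hmc.2.1.preconnected a0 x
  obtain ⟨d, -, hdT, hdT'⟩ := w.exists_boundary_dart T ha0T hxT
  have huv : G.Adj d.fst d.snd := d.adj
  have huN : d.fst ∈ N := by
    rcases hdT with h | h
    · exact absurd (Or.inr (Finset.mem_coe.mpr (Finset.mem_biUnion.mpr
        ⟨d.fst, Finset.mem_coe.mp h, (SimpleGraph.mem_neighborFinset _ _ _).mpr huv⟩))) hdT'
    · exact Finset.mem_coe.mp h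
  have huB : d.fst ∈ B := hNB _ huN
  have hvS : d.snd ∉ S := fun h => hdT' (Or.inl (Finset.mem_coe.mpr h))
  -- perfect matching through the crossing edge
  obtain ⟨M', hM', he'⟩ := hmc.2.2 s(d.fst, d.snd) ((SimpleGraph.mem_edgeSet _).mpr huv)
  have hM'uv : M'.Adj d.fst d.snd := SimpleGraph.Subgraph.mem_edgeSet.mp he'
  have hp'u : pmPartner hM' d.fst = d.snd := (pmPartner_eq hM' hM'uv).symm
  have hmem' : ∀ a ∈ S, pmPartner hM' a ∈ N.erase d.fst := by
    intro a ha
    refine Finset.mem_erase.mpr ⟨?_, Finset.mem_biUnion.mpr ⟨a, ha,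
      (SimpleGraph.mem_neighborFinset _ _ _).mpr (M'.adj_sub (pmPartner_adj hM' a))⟩⟩
    intro hpe
    have h1 : M'.Adj d.fst a := (hpe ▸ pmPartner_adj hM' a).symm
    have h2 : a = pmPartner hM' d.fst := pmPartner_eq hM' h1
    rw [hp'u] at h2
    exact hvS (h2 ▸ ha)
  have hle' : S.card ≤ (N.erase d.fst).card :=
    Finset.card_le_card_of_injOn _ hmem' (pmPartner_injective hM').injOn
  have hcard' : (N.erase d.fst).card = N.card - 1 := Finset.card_erase_of_mem huN
  have hSpos : 0 < S.card := Finset.card_pos.mpr ⟨a0, ha0⟩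
  omega

/-- Given a bipartite matching covered spanning subgraph `G` of `G₂` and an
edge `xy` of `G₂` with `x`, `y` in opposite colour classes, there is a perfect
matching of `G₂` using the edge `xy` (and otherwise edges of `G`). -/
lemma mainKey [Fintype V] {G G₂ : SimpleGraph V} (hle : G ≤ G₂) {A B : Set V}
    (hAB : A ∪ B = Set.univ) (hdisj : Disjoint A B)
    (hadj : ∀ ⦃u v : V⦄, G.Adj u v → (u ∈ A ↔ v ∈ B))
    (hmc : MatchingCovered G)
    {x y : V} (hx : x ∈ A) (hy : y ∈ B) (hxy : G₂.Adj x y) :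
    ∃ M : G₂.Subgraph, M.IsPerfectMatching ∧ M.Adj x y := by
  classical
  have hxney : x ≠ y := fun h => hdisj.ne_of_mem hx (h ▸ hy) rfl
  -- Hall's condition for `A \ {x}` with `y` removed
  set t : (A \ {x} : Set V) → Finset V :=
    fun a => (G.neighborFinset a.val).erase y with ht
  have hall : ∀ s : Finset (A \ {x} : Set V), s.card ≤ (s.biUnion t).card := by
    intro s
    rcases s.eq_empty_or_nonempty with rfl | hs
    · simp
    set S : Finset V := s.image Subtype.val with hSdef
    have hScard : S.card = s.card := Finset.card_image_of_injective s Subtype.val_injective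
    have hSA : ↑S ⊆ A := by
      intro a ha
      simp only [hSdef, Finset.coe_image, Set.mem_image] at ha
      obtain ⟨b, -, rfl⟩ := ha
      exact b.2.1
    have hxS : x ∉ S := by
      intro hxS
      simp only [hSdef, Finset.mem_image] at hxS
      obtain ⟨b, -, hb⟩ := hxS
      exact b.2.2 hb
    have hSne : S.Nonempty := hs.image _
    have hsur := surplus hAB hdisj hadj hmc hSne hSA hx hxS
    have hbi : s.biUnion t = (S.biUnion fun a => G.neighborFinset a).erase y := by
      rw [hSdef, Finset.image_biUnion]
      ext v
      simp only [Finset.mem_biUnion, Finset.mem_erase, ht]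
      tauto
    rw [hbi, ← hScard]
    set N : Finset V := S.biUnion fun a => G.neighborFinset a with hNdef
    have hsub : N ⊆ insert y (N.erase y) := by
      intro v hv
      by_cases hvy : v = y
      · exact Finset.mem_insert.mpr (Or.inl hvy)
      · exact Finset.mem_insert.mpr (Or.inr (Finset.mem_erase.mpr ⟨hvy, hv⟩))
    have h1 := Finset.card_le_card hsub
    have h2 := Finset.card_insert_le y (N.erase y)
    omega
  obtain ⟨m, hminj, hmmem⟩ :=
    (Finset.all_card_le_biUnion_card_iff_exists_injective t).mp hall
  have hmadj : ∀ a : (A \ {x} : Set V), G.Adj a.val (m a) := by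
    intro a
    have h := hmmem a
    rw [ht] at h
    exact (SimpleGraph.mem_neighborFinset _ _ _).mp (Finset.mem_of_mem_erase h)
  have hmney : ∀ a : (A \ {x} : Set V), m a ≠ y := by
    intro a
    have h := hmmem a
    rw [ht] at h
    exact (Finset.mem_erase.mp h).1
  have hmB : ∀ a : (A \ {x} : Set V), m a ∈ B := fun a => (hadj (hmadj a)).mp a.2.1
  -- surjectivity of `m` onto `B \ {y}`
  have hAB' : A.ncard = B.ncard := bipartition_ncard_eq hAB hdisj hadj (mc_exists_pm hmc)
  have hcardι : Fintype.card (A \ {x} : Set V) = A.ncard - 1 := by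
    rw [← Nat.card_eq_fintype_card, Nat.card_coe_set_eq,
      Set.ncard_diff_singleton_of_mem hx]
  have hsurj : ∀ v ∈ B, v ≠ y → ∃ a : (A \ {x} : Set V), m a = v := by
    intro v hv hvy
    have himsub : Finset.univ.image m ⊆ (B \ {y} : Set V).toFinset := by
      intro w hw
      obtain ⟨a, -, rfl⟩ := Finset.mem_image.mp hw
      rw [Set.mem_toFinset]
      exact ⟨hmB a, hmney a⟩
    have hFcard : (B \ {y} : Set V).toFinset.card = B.ncard - 1 := by
      rw [← Set.ncard_eq_toFinset_card',
        Set.ncard_diff_singleton_of_mem hy]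
    have himcard : (Finset.univ.image m).card = Fintype.card (A \ {x} : Set V) := by
      rw [Finset.card_image_of_injective _ hminj, Finset.card_univ]
    have heq : Finset.univ.image m = (B \ {y} : Set V).toFinset := by
      apply Finset.eq_of_subset_of_card_le himsub
      rw [hFcard, himcard, hcardι, hAB']
    have hv' : v ∈ Finset.univ.image m := by
      rw [heq, Set.mem_toFinset]; exact ⟨hv, hvy⟩
    obtain ⟨a, -, ha⟩ := Finset.mem_image.mp hv'
    exact ⟨a, ha⟩
  -- build the perfect matching of `G₂`
  set r : V → V → Prop := fun u v => ∃ h : u ∈ (A \ {x} : Set V), m ⟨u, h⟩ = v with hr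
  have hrG : ∀ {u v}, r u v → G.Adj u v := by
    rintro u v ⟨h, rfl⟩; exact hmadj ⟨u, h⟩
  have hrB : ∀ {u v}, r u v → v ∈ B := by
    rintro u v ⟨h, rfl⟩; exact hmB ⟨u, h⟩
  have hrA : ∀ {u v}, r u v → u ∈ A ∧ u ≠ x := by
    rintro u v ⟨h, rfl⟩; exact ⟨h.1, h.2⟩
  have hrny : ∀ {u v}, r u v → v ≠ y := by
    rintro u v ⟨h, rfl⟩; exact hmney ⟨u, h⟩
  have hnAB : ∀ {v}, v ∈ A → v ∈ B → False := fun h1 h2 => hdisj.ne_of_mem h1 h2 rfl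
  refine ⟨⟨Set.univ,
    fun u v => (u = x ∧ v = y) ∨ (u = y ∧ v = x) ∨ r u v ∨ r v u, ?_, ?_, ?_⟩, ?_,
    Or.inl ⟨rfl, rfl⟩⟩
  · rintro u v (⟨rfl, rfl⟩ | ⟨rfl, rfl⟩ | h | h)
    · exact hxy
    · exact hxy.symm
    · exact hle (hrG h)
    · exact (hle (hrG h)).symm
  · intro u v _; trivial
  · constructor
    rintro u v (⟨rfl, rfl⟩ | ⟨rfl, rfl⟩ | h | h)
    · exact Or.inr (Or.inl ⟨rfl, rfl⟩)
    · exact Or.inl ⟨rfl, rfl⟩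
    · exact Or.inr (Or.inr (Or.inr h))
    · exact Or.inr (Or.inr (Or.inl h))
  · rw [SimpleGraph.Subgraph.isPerfectMatching_iff]
    intro v
    by_cases hvx : v = x
    · subst hvx
      refine ⟨y, Or.inl ⟨rfl, rfl⟩, ?_⟩
      rintro w (⟨-, rfl⟩ | ⟨hvy', -⟩ | h | h)
      · rfl
      · exact absurd hvy' hxney
      · exact absurd rfl (hrA h).2
      · exact absurd (hrB h) fun hb => hnAB hx hb
    by_cases hvy : v = y
    · subst hvy
      refine ⟨x, Or.inr (Or.inl ⟨rfl, rfl⟩), ?_⟩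
      rintro w (⟨hvx', -⟩ | ⟨-, rfl⟩ | h | h)
      · exact absurd hvx' hvx
      · rfl
      · exact absurd (hrA h).1 fun ha => hnAB ha hy
      · exact absurd rfl (hrny h)
    have hvAB : v ∈ A ∪ B := hAB ▸ Set.mem_univ v
    by_cases hvA : v ∈ A
    · have hv' : v ∈ (A \ {x} : Set V) := ⟨hvA, hvx⟩
      refine ⟨m ⟨v, hv'⟩, Or.inr (Or.inr (Or.inl ⟨hv', rfl⟩)), ?_⟩
      rintro w (⟨rfl, -⟩ | ⟨rfl, -⟩ | ⟨h, rfl⟩ | h)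
      · exact absurd rfl hvx
      · exact absurd rfl hvy
      · exact congrArg m (Subtype.ext rfl)
      · exact absurd (hrB h) fun hb => hnAB hvA hb
    · have hvB : v ∈ B := hvAB.resolve_left hvA
      obtain ⟨a, ha⟩ := hsurj v hvB hvy
      refine ⟨a.val, Or.inr (Or.inr (Or.inr ⟨a.2, ha⟩)), ?_⟩
      rintro w (⟨hvx', -⟩ | ⟨hvy', -⟩ | h | ⟨h, hm⟩)
      · exact absurd hvx' hvx
      · exact absurd hvy' hvy
      · exact absurd (hrA h).1 hvA
      · exact congrArg Subtype.val (hminj (hm.trans ha.symm))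

/-- Lift a subgraph along an inclusion of graphs. -/
def liftSub {G G₂ : SimpleGraph V} (h : G ≤ G₂) (M : G.Subgraph) : G₂.Subgraph where
  verts := M.verts
  Adj := M.Adj
  adj_sub := fun ha => h (M.adj_sub ha)
  edge_vert := M.edge_vert
  symm := M.symm

lemma liftSub_pm {G G₂ : SimpleGraph V} (h : G ≤ G₂) {M : G.Subgraph}
    (hM : M.IsPerfectMatching) : (liftSub h M).IsPerfectMatching := hM

lemma liftSub_edgeSet {G G₂ : SimpleGraph V} (h : G ≤ G₂) (M : G.Subgraph) :
    (liftSub h M).edgeSet = M.edgeSet := rfl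

end Aux

/-- the exchange property of removable edges in bipartite
matching covered graphs. -/
theorem stmt12 {V : Type*} [Fintype V] (H : SimpleGraph V)
    (hMC : MatchingCovered H) (hbip : BipartiteGraph H)
    (e : Sym2 V) (he : RemovableEdge H e)
    (f : Sym2 V) (hf : RemovableEdge (H.deleteEdges {e}) f) :
    RemovableEdge H f ∧ RemovableEdge (H.deleteEdges {f}) e := by
  classical
  obtain ⟨heH, hmcHe⟩ := he
  obtain ⟨hfHe, hmcHef⟩ := hf
  rw [SimpleGraph.edgeSet_deleteEdges] at hfHe
  obtain ⟨hfH, hfe⟩ := hfHe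
  have hfe' : f ≠ e := by simpa using hfe
  have hcomm : (H.deleteEdges {e}).deleteEdges {f} = (H.deleteEdges {f}).deleteEdges {e} := by
    rw [SimpleGraph.deleteEdges_deleteEdges, SimpleGraph.deleteEdges_deleteEdges,
      Set.union_comm]
  have hle1 : (H.deleteEdges {e}).deleteEdges {f} ≤ H.deleteEdges {f} := by
    rw [hcomm]; exact SimpleGraph.deleteEdges_le _
  constructor
  · refine ⟨hfH, hMC.1, SimpleGraph.Connected.mono hle1 hmcHef.2.1, ?_⟩
    intro g hg
    rw [SimpleGraph.edgeSet_deleteEdges] at hg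
    obtain ⟨hgH, hgf⟩ := hg
    have hgf' : g ≠ f := by simpa using hgf
    by_cases hge : g = e
    · rw [hge]
      obtain ⟨A, B, hAB, hdisj, hadj⟩ := hbip
      clear hmcHe hcomm hgH hgf hgf' hge
      revert heH hmcHef hle1 hfe'
      induction e using Sym2.ind with
      | _ x y =>
        intro heH hmcHef hfe' hle1
        have hxyH : H.Adj x y := (SimpleGraph.mem_edgeSet _).mp heH
        have hadj' : ∀ ⦃u v : V⦄,
            ((H.deleteEdges {s(x, y)}).deleteEdges {f}).Adj u v → (u ∈ A ↔ v ∈ B) := by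
          intro u v h
          exact hadj (SimpleGraph.deleteEdges_le _ (SimpleGraph.deleteEdges_le _ h))
        have hadjHf : (H.deleteEdges {f}).Adj x y := by
          rw [SimpleGraph.deleteEdges_adj]
          exact ⟨hxyH, by simpa using fun h => hfe' h.symm⟩
        have hxAB : x ∈ A ∪ B := hAB ▸ Set.mem_univ x
        rcases hxAB with hxA | hxB
        · have hyB : y ∈ B := (hadj hxyH).mp hxA
          obtain ⟨M, hM, hMxy⟩ := mainKey hle1 hAB hdisj hadj' hmcHef hxA hyB hadjHf
          exact ⟨M, hM, SimpleGraph.Subgraph.mem_edgeSet.mpr hMxy⟩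
        · have hxnA : x ∉ A := fun h => hdisj.ne_of_mem h hxB rfl
          have hyA : y ∈ A := by
            have hyAB : y ∈ A ∪ B := hAB ▸ Set.mem_univ y
            rcases hyAB with h | h
            · exact h
            · exact absurd ((hadj hxyH).mpr h) hxnA
          obtain ⟨M, hM, hMyx⟩ :=
            mainKey hle1 hAB hdisj hadj' hmcHef hyA hxB hadjHf.symm
          exact ⟨M, hM, by
            rw [Sym2.eq_swap]; exact SimpleGraph.Subgraph.mem_edgeSet.mpr hMyx⟩
    · have hg' : g ∈ ((H.deleteEdges {e}).deleteEdges {f}).edgeSet := by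
        rw [SimpleGraph.edgeSet_deleteEdges, SimpleGraph.edgeSet_deleteEdges]
        exact ⟨⟨hgH, by simpa using hge⟩, by simpa using hgf'⟩
      obtain ⟨M, hM, hgM⟩ := hmcHef.2.2 g hg'
      exact ⟨liftSub hle1 M, liftSub_pm hle1 hM, hgM⟩
  · refine ⟨?_, ?_⟩
    · rw [SimpleGraph.edgeSet_deleteEdges]
      exact ⟨heH, by simpa using fun h => hfe' h.symm⟩
    · rw [← hcomm]; exact hmcHef
end

section
/- Let H be a simple bipartite graph on at least four vertices with color classes A and B satisfying |A| = |B|. Then the following statements are equivalent: (i) H is matching covered; (ii) |N(S)| ≥ |S| + 1 for every nonempty proper subset S of A; (iii) H − {a, b} has a perfect matching for every pair of vertices a ∈ A and b ∈ B. -/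
section AuxStmt14

lemma aux_partner {W : Type*} {G : SimpleGraph W} {M : G.Subgraph} (hM : M.IsPerfectMatching) :
    ∃ g : W → W, Function.Injective g ∧ ∀ v, M.Adj v (g v) := by
  have h := SimpleGraph.Subgraph.isPerfectMatching_iff.mp hM
  refine ⟨fun v => (h v).choose, ?_, fun v => (h v).choose_spec.1⟩
  intro u v huv
  have hu : M.Adj ((h u).choose) u := ((h u).choose_spec.1).symm
  have hv : M.Adj ((h v).choose) v := ((h v).choose_spec.1).symm
  simp only at huv
  rw [← huv] at hv
  exact ((h ((h u).choose)).choose_spec.2 u hu).trans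
    (((h ((h u).choose)).choose_spec.2 v hv)).symm

lemma aux_toInduce {V : Type*} {H : SimpleGraph V} {C : Set V} {M : H.Subgraph}
    (hv : M.verts = C) (hm : M.IsMatching) : HasPerfMatching (H.induce C) := by
  refine ⟨⟨Set.univ, fun v w => M.Adj v w, fun {v w} h => M.adj_sub h,
    fun {v w} h => Set.mem_univ _, ⟨fun v w h => h.symm⟩⟩, ?_, fun v => Set.mem_univ _⟩
  intro v _
  have hvm : (v : V) ∈ M.verts := by rw [hv]; exact v.2
  obtain ⟨w, hw, hwu⟩ := hm hvm
  have hwC : w ∈ C := by rw [← hv]; exact M.edge_vert hw.symm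
  refine ⟨⟨w, hwC⟩, hw, ?_⟩
  rintro ⟨y, hy⟩ h
  exact Subtype.ext (hwu y h)

lemma aux_fromInduce {V : Type*} {H : SimpleGraph V} {C : Set V}
    (h : HasPerfMatching (H.induce C)) :
    ∃ g : C → C, Function.Injective g ∧ ∀ v : C, H.Adj v.1 (g v).1 := by
  obtain ⟨M, hM⟩ := h
  obtain ⟨g, hg, hadj⟩ := aux_partner hM
  exact ⟨g, hg, fun v => M.adj_sub (hadj v)⟩

lemma aux_hall_matching {V : Type*} [Fintype V] {H : SimpleGraph V} {A B : Set V}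
    (hdis : Disjoint A B)
    (A' B' : Set V) (hA' : A' ⊆ A) (hB' : B' ⊆ B)
    (hcard : A'.ncard = B'.ncard)
    (hhall : ∀ S : Set V, S ⊆ A' →
      S.ncard ≤ Set.ncard {v | v ∈ B' ∧ ∃ x ∈ S, H.Adj x v}) :
    ∃ M : H.Subgraph, M.verts = A' ∪ B' ∧ M.IsMatching := by
  classical
  set t : A' → Finset V :=
    fun x => ({v | v ∈ B' ∧ H.Adj ↑x v}).toFinite.toFinset with ht
  have hall : ∀ s : Finset A', s.card ≤ (s.biUnion t).card := by
    intro s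
    have h1 : s.card = (s.image (Subtype.val)).card :=
      (Finset.card_image_of_injective s Subtype.val_injective).symm
    have hS : (↑(s.image (Subtype.val)) : Set V) ⊆ A' := by
      intro v hv
      simp only [Finset.coe_image, Set.mem_image, Finset.mem_coe] at hv
      obtain ⟨x, -, rfl⟩ := hv
      exact x.2
    have h2 : ((s.biUnion t : Finset V) : Set V) =
        {v | v ∈ B' ∧ ∃ x ∈ (↑(s.image (Subtype.val)) : Set V), H.Adj x v} := by
      ext v
      simp only [Finset.coe_biUnion, Set.mem_iUnion, Finset.mem_coe, Finset.coe_image,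
        Set.mem_image, Set.mem_setOf_eq, ht, Set.Finite.mem_toFinset]
      aesop
    have h3 := hhall _ hS
    rw [h1, ← Set.ncard_coe_finset, ← Set.ncard_coe_finset (s.biUnion t), h2]
    exact h3
  obtain ⟨f, hinj, hmem⟩ := (Finset.all_card_le_biUnion_card_iff_exists_injective t).mp hall
  have hmem' : ∀ x : A', f x ∈ B' ∧ H.Adj ↑x (f x) := by
    intro x
    have := hmem x
    rw [ht, Set.Finite.mem_toFinset] at this
    exact this
  set f' : A' → B' := fun x => ⟨f x, (hmem' x).1⟩ with hf'
  have hinj' : Function.Injective f' := by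
    intro u v huv
    exact hinj (congrArg Subtype.val huv)
  have hbij : Function.Bijective f' := by
    refine (Fintype.bijective_iff_injective_and_card f').mpr ⟨hinj', ?_⟩
    rw [← Nat.card_eq_fintype_card, ← Nat.card_eq_fintype_card,
      Nat.card_coe_set_eq, Nat.card_coe_set_eq, hcard]
  have hdis' : Disjoint A' B' := Set.disjoint_of_subset hA' hB' hdis
  exact SimpleGraph.Subgraph.IsMatching.exists_of_disjoint_sets_of_equiv hdis'
    (Equiv.ofBijective f' hbij) (fun v => (hmem' v).2)

end AuxStmt14

/-- characterizations of bipartite matching covered graphs. -/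
theorem stmt14 {V : Type*} [Fintype V] (H : SimpleGraph V) (A B : Set V)
    (hbip : BipartitionOf H A B) (hAB : A.ncard = B.ncard)
    (hcard : 4 ≤ Nat.card V) :
    (MatchingCovered H ↔
      (∀ S : Set V, S ⊆ A → S.Nonempty → S ≠ A →
        S.ncard + 1 ≤ Set.ncard {v : V | ∃ x ∈ S, H.Adj x v})) ∧
    ((∀ S : Set V, S ⊆ A → S.Nonempty → S ≠ A →
        S.ncard + 1 ≤ Set.ncard {v : V | ∃ x ∈ S, H.Adj x v}) ↔
      (∀ a ∈ A, ∀ b ∈ B, HasPerfMatching (H.induce (({a, b} : Set V)ᶜ)))) := by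
  classical
  obtain ⟨hun, hdis, hadjAB⟩ := hbip
  have hfin : ∀ s : Set V, s.Finite := fun s => s.toFinite
  have memAB : ∀ v : V, v ∈ A ∨ v ∈ B := fun v => by
    have : v ∈ A ∪ B := by rw [hun]; trivial
    exact this
  have hnAB : ∀ {v}, v ∈ A → v ∉ B := fun hv hb => Set.disjoint_left.mp hdis hv hb
  have hAtoB : ∀ {u v : V}, H.Adj u v → u ∈ A → v ∈ B := fun h hu => (hadjAB h).mp hu
  have hBtoA : ∀ {u v : V}, H.Adj u v → u ∈ B → v ∈ A := by
    intro u v h hu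
    rcases memAB v with hv | hv
    · exact hv
    · exact absurd ((hadjAB h).mpr hv) (fun ha => hnAB ha hu)
  have hcardsum : A.ncard + B.ncard = Nat.card V := by
    rw [← Set.ncard_union_eq hdis (hfin A) (hfin B), hun, Set.ncard_univ]
  have hA2 : 2 ≤ A.ncard := by omega
  have hNsubB : ∀ {S : Set V}, S ⊆ A → {v : V | ∃ x ∈ S, H.Adj x v} ⊆ B := by
    rintro S hS v ⟨x, hx, hxv⟩
    exact hAtoB hxv (hS hx)
  -- Key: Hall-based matching avoiding a ∈ A and b ∈ B, assuming (ii)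
  have key_matching : (∀ S : Set V, S ⊆ A → S.Nonempty → S ≠ A →
        S.ncard + 1 ≤ Set.ncard {v : V | ∃ x ∈ S, H.Adj x v}) →
      ∀ a ∈ A, ∀ b ∈ B, ∃ M : H.Subgraph,
        M.verts = (A \ {a}) ∪ (B \ {b}) ∧ M.IsMatching := by
    intro hii a ha b hb
    refine aux_hall_matching hdis (A \ {a}) (B \ {b}) Set.diff_subset Set.diff_subset ?_ ?_
    · rw [Set.ncard_diff_singleton_of_mem ha,
        Set.ncard_diff_singleton_of_mem hb, hAB]
    · intro S hS
      rcases S.eq_empty_or_nonempty with rfl | hne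
      · simp
      have hSA : S ⊆ A := hS.trans Set.diff_subset
      have hSne : S ≠ A := by
        intro h
        exact (hS (h ▸ ha)).2 rfl
      have h1 := hii S hSA hne hSne
      have hsubset : {v | v ∈ B \ {b} ∧ ∃ x ∈ S, H.Adj x v} =
          {v : V | ∃ x ∈ S, H.Adj x v} \ {b} := by
        ext v
        constructor
        · rintro ⟨⟨hvB, hvb⟩, hx⟩
          exact ⟨hx, hvb⟩
        · rintro ⟨hx, hvb⟩
          exact ⟨⟨hNsubB hSA hx, hvb⟩, hx⟩
      rw [hsubset]
      by_cases hbmem : b ∈ {v : V | ∃ x ∈ S, H.Adj x v}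
      · have h2 := Set.ncard_diff_singleton_of_mem hbmem
        have h3 : 0 < ({v : V | ∃ x ∈ S, H.Adj x v}).ncard :=
          (Set.ncard_pos (hfin _)).mpr ⟨b, hbmem⟩
        omega
      · rw [Set.diff_singleton_eq_self hbmem]
        omega
  -- (ii) → (iii)
  have hii_iii : (∀ S : Set V, S ⊆ A → S.Nonempty → S ≠ A →
        S.ncard + 1 ≤ Set.ncard {v : V | ∃ x ∈ S, H.Adj x v}) →
      ∀ a ∈ A, ∀ b ∈ B, HasPerfMatching (H.induce (({a, b} : Set V)ᶜ)) := by
    intro hii a ha b hb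
    obtain ⟨M, hMv, hMm⟩ := key_matching hii a ha b hb
    have hverts : M.verts = (({a, b} : Set V)ᶜ) := by
      rw [hMv]
      ext v
      simp only [Set.mem_union, Set.mem_diff, Set.mem_singleton_iff, Set.mem_compl_iff,
        Set.mem_insert_iff, not_or]
      constructor
      · rintro (⟨hv, h⟩ | ⟨hv, h⟩)
        · exact ⟨h, fun hvb => hnAB hv (hvb ▸ hb)⟩
        · exact ⟨fun hva => hnAB (hva ▸ ha) hv, h⟩
      · rintro ⟨h1, h2⟩
        rcases memAB v with hv | hv
        · exact Or.inl ⟨hv, h1⟩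
        · exact Or.inr ⟨hv, h2⟩
    exact aux_toInduce hverts hMm
  -- (iii) → (ii)
  have hiii_ii : (∀ a ∈ A, ∀ b ∈ B, HasPerfMatching (H.induce (({a, b} : Set V)ᶜ))) →
      ∀ S : Set V, S ⊆ A → S.Nonempty → S ≠ A →
        S.ncard + 1 ≤ Set.ncard {v : V | ∃ x ∈ S, H.Adj x v} := by
    intro hiii S hSA hSne hSneq
    set N := {v : V | ∃ x ∈ S, H.Adj x v} with hNdef
    have hNB : N ⊆ B := hNsubB hSA
    obtain ⟨a, haA, haS⟩ : ∃ a, a ∈ A ∧ a ∉ S := by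
      obtain ⟨a, h1, h2⟩ := Set.exists_of_ssubset (hSA.ssubset_of_ne hSneq)
      exact ⟨a, h1, h2⟩
    obtain ⟨s0, hs0⟩ := hSne
    have hBne : B.Nonempty := by
      apply (Set.ncard_pos (hfin B)).mp
      omega
    obtain ⟨b0, hb0⟩ := hBne
    have hNne : N.Nonempty := by
      obtain ⟨g, hginj, hgadj⟩ := aux_fromInduce (hiii a haA b0 hb0)
      have hs0C : s0 ∈ (({a, b0} : Set V)ᶜ) := by
        simp only [Set.mem_compl_iff, Set.mem_insert_iff, Set.mem_singleton_iff, not_or]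
        exact ⟨fun h => haS (h ▸ hs0), fun h => hnAB (hSA hs0) (h ▸ hb0)⟩
      exact ⟨(g ⟨s0, hs0C⟩).1, s0, hs0, hgadj ⟨s0, hs0C⟩⟩
    obtain ⟨b, hbN⟩ := hNne
    have hbB : b ∈ B := hNB hbN
    obtain ⟨g, hginj, hgadj⟩ := aux_fromInduce (hiii a haA b hbB)
    have hSC : S ⊆ (({a, b} : Set V)ᶜ) := by
      intro s hs
      simp only [Set.mem_compl_iff, Set.mem_insert_iff, Set.mem_singleton_iff, not_or]
      exact ⟨fun h => haS (h ▸ hs), fun h => hnAB (hSA hs) (h ▸ hbB)⟩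
    set g' : V → V := fun v =>
      if hv : v ∈ (({a, b} : Set V)ᶜ) then (g ⟨v, hv⟩).1 else v with hg'
    have hinjOn : Set.InjOn g' S := by
      intro u hu v hv huv
      simp only [hg', dif_pos (hSC hu), dif_pos (hSC hv)] at huv
      exact congrArg Subtype.val (hginj (Subtype.ext huv))
    have himg : g' '' S ⊆ N \ {b} := by
      rintro _ ⟨s, hs, rfl⟩
      have hsC := hSC hs
      simp only [hg', dif_pos hsC]
      refine ⟨⟨s, hs, hgadj ⟨s, hsC⟩⟩, ?_⟩
      have h2 := (g ⟨s, hsC⟩).2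
      simp only [Set.mem_compl_iff, Set.mem_insert_iff, Set.mem_singleton_iff, not_or] at h2
      exact h2.2
    have h1 : S.ncard = (g' '' S).ncard := (Set.ncard_image_of_injOn hinjOn).symm
    have h2 : (g' '' S).ncard ≤ (N \ {b}).ncard := Set.ncard_le_ncard himg (hfin _)
    have h3 : (N \ {b}).ncard = N.ncard - 1 := Set.ncard_diff_singleton_of_mem hbN
    have h4 : 0 < N.ncard := (Set.ncard_pos (hfin _)).mpr ⟨b, hbN⟩
    omega
  -- MC → (ii)
  have hmc_ii : MatchingCovered H →
      ∀ S : Set V, S ⊆ A → S.Nonempty → S ≠ A →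
        S.ncard + 1 ≤ Set.ncard {v : V | ∃ x ∈ S, H.Adj x v} := by
    intro hmc S hSA hSne hSneq
    by_contra hcon
    push_neg at hcon
    set N := {v : V | ∃ x ∈ S, H.Adj x v} with hNdef
    have hNB : N ⊆ B := hNsubB hSA
    set X := S ∪ N with hX
    obtain ⟨s0, hs0⟩ := hSne
    obtain ⟨z, hzA, hzS⟩ : ∃ z, z ∈ A ∧ z ∉ S := by
      obtain ⟨z, h1, h2⟩ := Set.exists_of_ssubset (hSA.ssubset_of_ne hSneq)
      exact ⟨z, h1, h2⟩
    have hzX : z ∉ X := by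
      rintro (h | h)
      · exact hzS h
      · exact hnAB hzA (hNB h)
    obtain ⟨p⟩ := hmc.2.1.preconnected s0 z
    obtain ⟨d, hd, hdX, hdX'⟩ := p.exists_boundary_dart X (Or.inl hs0) hzX
    have hdadj : H.Adj d.fst d.snd := d.adj
    have hfN : d.fst ∈ N := by
      rcases hdX with h | h
      · exact absurd (Or.inr ⟨d.fst, h, hdadj⟩ : d.snd ∈ X) hdX'
      · exact h
    have hqA : d.snd ∈ A := hBtoA hdadj (hNB hfN)
    have hqS : d.snd ∉ S := fun h => hdX' (Or.inl h)
    have hedge : s(d.snd, d.fst) ∈ H.edgeSet := hdadj.symm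
    obtain ⟨M, hMpm, hMe⟩ := hmc.2.2 _ hedge
    obtain ⟨g, hginj, hgadj⟩ := aux_partner hMpm
    have hgS : g '' S ⊆ N := by
      rintro _ ⟨s, hs, rfl⟩
      exact ⟨s, hs, M.adj_sub (hgadj s)⟩
    have himgcard : (g '' S).ncard = S.ncard := Set.ncard_image_of_injective S hginj
    have hcard1 : S.ncard ≤ N.ncard :=
      himgcard ▸ Set.ncard_le_ncard hgS (hfin _)
    have hEq : g '' S = N := Set.eq_of_subset_of_ncard_le hgS (by omega) (hfin _)
    rw [← hEq] at hfN
    obtain ⟨s, hsS, hgs⟩ := hfN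
    have hM1 : M.Adj d.fst s := by rw [← hgs]; exact (hgadj s).symm
    have hM2 : M.Adj d.fst d.snd := (SimpleGraph.Subgraph.mem_edgeSet.mp hMe).symm
    have huniq := (SimpleGraph.Subgraph.isPerfectMatching_iff.mp hMpm) d.fst
    exact hqS ((huniq.unique hM1 hM2) ▸ hsS)
  -- (ii) → MC
  have hii_mc : (∀ S : Set V, S ⊆ A → S.Nonempty → S ≠ A →
        S.ncard + 1 ≤ Set.ncard {v : V | ∃ x ∈ S, H.Adj x v}) → MatchingCovered H := by
    intro hii
    have hhallA : ∀ S : Set V, S ⊆ A →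
        S.ncard ≤ Set.ncard {v | v ∈ B ∧ ∃ x ∈ S, H.Adj x v} := by
      intro S hS
      rcases S.eq_empty_or_nonempty with rfl | hne
      · simp
      by_cases hSA' : S = A
      · obtain ⟨x, hx⟩ := hne
        have hx' : x ∈ A := hS hx
        have hcard5 : (A \ {x}).ncard = A.ncard - 1 :=
          Set.ncard_diff_singleton_of_mem hx'
        have hne2 : (A \ {x}).Nonempty := by
          apply (Set.ncard_pos (hfin _)).mp
          omega
        have hneq2 : A \ {x} ≠ A := by
          intro h
          have : x ∈ A \ {x} := h.symm ▸ hx'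
          exact this.2 rfl
        have h5 := hii _ Set.diff_subset hne2 hneq2
        have hmono : {v : V | ∃ y ∈ A \ {x}, H.Adj y v} ⊆
            {v | v ∈ B ∧ ∃ y ∈ S, H.Adj y v} := by
          rintro v ⟨y, hy, hyv⟩
          exact ⟨hAtoB hyv hy.1, y, hSA'.symm ▸ hy.1, hyv⟩
        have h6 := Set.ncard_le_ncard hmono (hfin _)
        have h7 : S.ncard = A.ncard := by rw [hSA']
        omega
      · have h5 := hii S hS hne hSA'
        have heq : {v : V | ∃ x ∈ S, H.Adj x v} = {v | v ∈ B ∧ ∃ x ∈ S, H.Adj x v} := by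
          ext v
          exact ⟨fun hv => ⟨hNsubB hS hv, hv⟩, fun h => h.2⟩
        rw [← heq]
        omega
    obtain ⟨M0, hM0v, hM0m⟩ := aux_hall_matching hdis A B
      (Set.Subset.refl A) (Set.Subset.refl B) hAB hhallA
    have hM0pm : M0.IsPerfectMatching :=
      ⟨hM0m, fun v => by rw [hM0v, hun]; trivial⟩
    have hconn : H.Connected := by
      rw [SimpleGraph.connected_iff]
      constructor
      · intro u v
        by_contra hnr
        set X := {w : V | H.Reachable u w} with hXdef
        have huX : u ∈ X := SimpleGraph.Reachable.refl u
        have hclosed : ∀ {w y : V}, w ∈ X → H.Adj w y → y ∈ X :=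
          fun hw h => hw.trans h.reachable
        obtain ⟨g, hginj, hgadj⟩ := aux_partner hM0pm
        have hgadj' : ∀ w, H.Adj w (g w) := fun w => M0.adj_sub (hgadj w)
        have hgX : ∀ {w}, w ∈ X → g w ∈ X := fun hw => hclosed hw (hgadj' _)
        have hgAX : g '' (A ∩ X) ⊆ B ∩ X := by
          rintro _ ⟨w, ⟨hwa, hwx⟩, rfl⟩
          exact ⟨hAtoB (hgadj' w) hwa, hgX hwx⟩
        have hgBX : g '' (B ∩ X) ⊆ A ∩ X := by
          rintro _ ⟨w, ⟨hwb, hwx⟩, rfl⟩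
          exact ⟨hBtoA (hgadj' w) hwb, hgX hwx⟩
        have hc1 : (A ∩ X).ncard ≤ (B ∩ X).ncard := by
          calc (A ∩ X).ncard = (g '' (A ∩ X)).ncard :=
                (Set.ncard_image_of_injective _ hginj).symm
            _ ≤ (B ∩ X).ncard := Set.ncard_le_ncard hgAX (hfin _)
        have hc2 : (B ∩ X).ncard ≤ (A ∩ X).ncard := by
          calc (B ∩ X).ncard = (g '' (B ∩ X)).ncard :=
                (Set.ncard_image_of_injective _ hginj).symm
            _ ≤ (A ∩ X).ncard := Set.ncard_le_ncard hgBX (hfin _)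
        have hSne : (A ∩ X).Nonempty := by
          rcases memAB u with hu | hu
          · exact ⟨u, hu, huX⟩
          · exact ⟨g u, hBtoA (hgadj' u) hu, hgX huX⟩
        by_cases hSA' : A ∩ X = A
        · have hAX : A ⊆ X := by
            intro w hw
            rw [← hSA'] at hw
            exact hw.2
          have hBX : B ⊆ X := by
            intro w hw
            exact hclosed (hAX (hBtoA (hgadj' w) hw)) (hgadj' w).symm
          rcases memAB v with hv | hv
          · exact hnr (hAX hv)
          · exact hnr (hBX hv)
        · have h5 := hii (A ∩ X) Set.inter_subset_left hSne hSA'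
          have hsub : {v : V | ∃ x ∈ A ∩ X, H.Adj x v} ⊆ B ∩ X := by
            rintro v ⟨x, ⟨hxa, hxX⟩, hx⟩
            exact ⟨hAtoB hx hxa, hclosed hxX hx⟩
          have h6 := Set.ncard_le_ncard hsub (hfin _)
          omega
      · have : 0 < Nat.card V := by omega
        exact (Nat.card_pos_iff.mp this).1
    refine ⟨by omega, hconn, ?_⟩
    have claim : ∀ x y : V, H.Adj x y → x ∈ A →
        ∃ M : H.Subgraph, M.IsPerfectMatching ∧ s(x, y) ∈ M.edgeSet := by
      intro x y hxy hx
      have hy : y ∈ B := hAtoB hxy hx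
      obtain ⟨M1, hM1v, hM1m⟩ := key_matching hii x hx y hy
      set M2 := H.subgraphOfAdj hxy with hM2
      have hdisj : Disjoint M1.support M2.support := by
        rw [Set.disjoint_left]
        intro w hw1 hw2
        have h1 : w ∈ (A \ {x}) ∪ (B \ {y}) := hM1v ▸ M1.support_subset_verts hw1
        have h2 : w ∈ ({x, y} : Set V) := by
          have := M2.support_subset_verts hw2
          simpa [hM2] using this
        rcases h2 with rfl | rfl
        · rcases h1 with ⟨_, h⟩ | ⟨h, _⟩
          · exact h rfl
          · exact hnAB hx h
        · rcases h1 with ⟨h, _⟩ | ⟨_, h⟩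
          · exact hnAB h hy
          · exact h rfl
      have hsup : (M1 ⊔ M2).IsMatching :=
        hM1m.sup (SimpleGraph.Subgraph.IsMatching.subgraphOfAdj hxy) hdisj
      have hspan : (M1 ⊔ M2).IsSpanning := by
        intro v
        show v ∈ (M1 ⊔ M2).verts
        rw [SimpleGraph.Subgraph.verts_sup, hM1v]
        by_cases hvx : v = x
        · right; simp [hM2, hvx]
        · by_cases hvy : v = y
          · right; simp [hM2, hvy]
          · left
            rcases memAB v with hv | hv
            · exact Or.inl ⟨hv, hvx⟩
            · exact Or.inr ⟨hv, hvy⟩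
      refine ⟨M1 ⊔ M2, ⟨hsup, hspan⟩, ?_⟩
      rw [SimpleGraph.Subgraph.mem_edgeSet]
      exact SimpleGraph.Subgraph.sup_adj.mpr (Or.inr (by simp [hM2]))
    intro e he
    revert he
    refine Sym2.ind ?_ e
    intro x y he
    have hxy : H.Adj x y := he
    rcases memAB x with hx | hx
    · exact claim x y hxy hx
    · obtain ⟨M, h1, h2⟩ := claim y x hxy.symm (hBtoA hxy hx)
      exact ⟨M, h1, by rwa [Sym2.eq_swap]⟩
  exact ⟨⟨hmc_ii, hii_mc⟩, ⟨hii_iii, hiii_ii⟩⟩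
end
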